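/- arXiv:1807.01819 — 4 statements merged into one kernel-verified Lean document; each statement's English description precedes it below -/
import Mathlib

section
/- Let p ∈ C be continuous and let u0 ∈ C. Define the renewal density α(τ) = Σ_{i≥0} (u0 * p^{*(i)})(τ), where p^{*(i)} denotes i-fold self-convolution with the convention (u0 * p^{*(0)}) := u0. Then the function u(x,τ) = u0(x+τ) + ∫_0^τ p(x+τ−s) α(s) ds is a strong solution of the Kolmogorov forward equation for residual times: u is C¹ on [0,∞)×[0,∞), u(x,0) = u0(x), and ∂_τ u(x,τ) − ∂_x u(x,τ) = p(x) u(0,τ) for all x, τ ≥ 0. -/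
open MeasureTheory Set Filter Topology

/-- The class `𝒞` of positive, `C¹`, integrable probability densities on
`ℝ₊ = [0,∞)` vanishing at infinity. -/
def MemC (f : ℝ → ℝ) : Prop :=
  ContDiffOn ℝ 1 f (Set.Ici 0) ∧ MeasureTheory.IntegrableOn f (Set.Ici 0) ∧
    (∀ x ∈ Set.Ici (0 : ℝ), 0 < f x) ∧ (∫ x in Set.Ici (0 : ℝ), f x) = 1 ∧
    Filter.Tendsto f Filter.atTop (nhds 0)

/-- `renewalTerm p u0 i = u0 * p^{*(i)}`, the `i`-fold convolution of the
holding time density `p` with the initial density `u0` (convention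
`u0 * p^{*(0)} = u0`), where `(f * g)(τ) = ∫_0^τ f(τ-s) g(s) ds`. -/
noncomputable def renewalTerm (p u0 : ℝ → ℝ) : ℕ → ℝ → ℝ
  | 0 => u0
  | (i + 1) => fun τ => ∫ s in (0 : ℝ)..τ, p (τ - s) * renewalTerm p u0 i s

/-- The renewal density `α(τ) = Σ_{i≥0} (u0 * p^{*(i)})(τ)`. -/
noncomputable def renewalDensity (p u0 : ℝ → ℝ) (τ : ℝ) : ℝ :=
  ∑' i : ℕ, renewalTerm p u0 i τ

/-- A strong solution of the Kolmogorov forward equation for residual times: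
`u ∈ C¹(ℝ₊ × ℝ₊; ℝ₊)`, `u(·,0) ∈ 𝒞`, and
`∂_τ u(x,τ) − ∂_x u(x,τ) = p(x) u(0,τ)` for all `x, τ ≥ 0`. -/
def IsStrongSolution (p : ℝ → ℝ) (u : ℝ → ℝ → ℝ) : Prop :=
  ContDiffOn ℝ 1 (fun z : ℝ × ℝ => u z.1 z.2) (Set.Ici 0 ×ˢ Set.Ici 0) ∧
  (∀ x ∈ Set.Ici (0 : ℝ), ∀ τ ∈ Set.Ici (0 : ℝ), 0 ≤ u x τ) ∧
  MemC (fun x => u x 0) ∧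
  (∀ x ∈ Set.Ici (0 : ℝ), ∀ τ ∈ Set.Ici (0 : ℝ),
    derivWithin (fun t => u x t) (Set.Ici 0) τ
      - derivWithin (fun y => u y τ) (Set.Ici 0) x = p x * u 0 τ)


lemma exists_contDiff_ext {f : ℝ → ℝ} (hf : ContDiffOn ℝ 1 f (Set.Ici 0)) :
    ∃ F : ℝ → ℝ, ContDiff ℝ 1 F ∧ ∀ x : ℝ, 0 ≤ x → F x = f x := by
  set d : ℝ → ℝ := derivWithin f (Set.Ici 0) with hd
  have hdc : ContinuousOn d (Set.Ici 0) :=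
    hf.continuousOn_derivWithin (uniqueDiffOn_Ici 0) le_rfl
  have hder : ∀ x ∈ Set.Ici (0:ℝ), HasDerivWithinAt f (d x) (Set.Ici 0) x := fun x hx =>
    ((hf.differentiableOn one_ne_zero) x hx).hasDerivWithinAt
  set F : ℝ → ℝ := fun x => if 0 ≤ x then f x else f 0 + d 0 * x with hF
  have hFf : ∀ x : ℝ, 0 ≤ x → F x = f x := fun x hx => if_pos hx
  have key : ∀ x : ℝ, HasDerivAt F (d (max x 0)) x := by
    intro x
    rcases lt_trichotomy x 0 with hx | hx | hx
    · have hmax : max x 0 = 0 := max_eq_right hx.le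
      rw [hmax]
      have hlin : HasDerivAt (fun y : ℝ => f 0 + d 0 * y) (d 0) x := by
        simpa using ((hasDerivAt_id x).const_mul (d 0)).const_add (f 0)
      apply hlin.congr_of_eventuallyEq
      filter_upwards [Iio_mem_nhds hx] with y hy
      exact if_neg (not_le.2 hy)
    · subst hx
      have hIci : HasDerivWithinAt F (d 0) (Set.Ici 0) 0 := by
        apply (hder 0 (Set.mem_Ici.2 le_rfl)).congr (fun y hy => hFf y hy) (hFf 0 le_rfl)
      have hIic : HasDerivWithinAt F (d 0) (Set.Iic 0) 0 := by
        have hlin : HasDerivWithinAt (fun y : ℝ => f 0 + d 0 * y) (d 0) (Set.Iic 0) 0 := by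
          simpa using (((hasDerivAt_id (0:ℝ)).const_mul (d 0)).const_add (f 0)).hasDerivWithinAt
        apply hlin.congr _ (by simp [hF])
        intro y hy
        rcases lt_or_eq_of_le (Set.mem_Iic.1 hy) with h | h
        · simp [hF, not_le.2 h]
        · subst h; simp [hF]
      have := hIic.union hIci
      rw [Set.Iic_union_Ici] at this
      simpa [max_self] using this.hasDerivAt (by simp)
    · have hmax : max x 0 = x := max_eq_left hx.le
      rw [hmax]
      have hx' : HasDerivAt f (d x) x :=
        (hder x hx.le).hasDerivAt (Ici_mem_nhds hx)
      apply hx'.congr_of_eventuallyEq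
      filter_upwards [Ioi_mem_nhds hx] with y hy
      exact if_pos hy.le
  refine ⟨F, ?_, hFf⟩
  rw [contDiff_one_iff_deriv]
  constructor
  · exact fun x => (key x).differentiableAt
  · have : deriv F = fun x => d (max x 0) := funext fun x => (key x).deriv
    rw [this]
    exact hdc.comp_continuous (continuous_id.max continuous_const)
      (fun x => le_max_right x 0)

lemma exists_bound_Ici {f : ℝ → ℝ} (hc : ContinuousOn f (Set.Ici 0))
    (h0 : Tendsto f atTop (𝓝 0)) : ∃ M : ℝ, 0 ≤ M ∧ ∀ x : ℝ, 0 ≤ x → |f x| ≤ M := by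
  have h1 : ∀ᶠ x in atTop, |f x| < 1 := by
    have := Metric.tendsto_nhds.mp h0 1 one_pos
    simpa [Real.dist_eq] using this
  obtain ⟨T, hT⟩ := eventually_atTop.mp h1
  obtain ⟨C, hC⟩ := (isCompact_Icc : IsCompact (Set.Icc 0 (max T 0))).exists_bound_of_continuousOn
    (hc.mono (fun x hx => hx.1))
  refine ⟨max C 1, le_trans zero_le_one (le_max_right _ _), fun x hx => ?_⟩
  rcases le_or_gt x (max T 0) with h | h
  · exact le_trans (hC x ⟨hx, h⟩) (le_max_left _ _)
  · exact le_trans (hT x (le_trans (le_max_left T 0) h.le)).le (le_max_right _ _)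

lemma continuous_conv_param {G h : ℝ → ℝ} (hG : Continuous G) (hh : Continuous h) :
    Continuous fun z : ℝ × ℝ => ∫ s in (0:ℝ)..z.2, G (z.1 - s) * h s := by
  have huc : Continuous (Function.uncurry fun (z : ℝ × ℝ) (s : ℝ) => G (z.1 - s) * h s) := by
    apply Continuous.mul
    · exact hG.comp ((continuous_fst.comp continuous_fst).sub continuous_snd)
    · exact hh.comp continuous_snd
  exact intervalIntegral.continuous_parametric_intervalIntegral_of_continuous huc continuous_snd


lemma hasFDerivAt_conv {g h : ℝ → ℝ} (hg : ContDiff ℝ 1 g) (hh : Continuous h) (y₀ t₀ : ℝ) :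
    HasFDerivAt (fun z : ℝ × ℝ => ∫ s in (0:ℝ)..z.2, g (z.1 - s) * h s)
      ((∫ s in (0:ℝ)..t₀, deriv g (y₀ - s) * h s) • ContinuousLinearMap.fst ℝ ℝ ℝ +
       (g (y₀ - t₀) * h t₀) • ContinuousLinearMap.snd ℝ ℝ ℝ) (y₀, t₀) := by
  have hg'c : Continuous (deriv g) := hg.continuous_deriv le_rfl
  have hgc : Continuous g := hg.continuous
  have cY : ∀ w : ℝ, Continuous fun s => g (w - s) * h s := fun w =>
    (hgc.comp (continuous_const.sub continuous_id)).mul hh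
  set g' : ℝ → ℝ := deriv g with hg'
  set A : ℝ := ∫ s in (0:ℝ)..t₀, g' (y₀ - s) * h s with hA
  set B : ℝ := g (y₀ - t₀) * h t₀ with hB
  rw [hasFDerivAt_iff_isLittleO_nhds_zero, Asymptotics.isLittleO_iff]
  intro c hc
  -- bound for h near [-(|t₀|+1), |t₀|+1]
  obtain ⟨Mh, hMh⟩ := (isCompact_Icc : IsCompact (Set.Icc (-(|t₀|+1)) (|t₀|+1))).exists_bound_of_continuousOn hh.continuousOn
  have hMh0 : 0 ≤ Mh := le_trans (norm_nonneg (h 0)) (hMh 0 ⟨by simp [abs_nonneg]; linarith [abs_nonneg t₀], by linarith [abs_nonneg t₀]⟩)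
  set ε₂ : ℝ := c / (2 * (Mh * |t₀| + 1)) with hε₂def
  have hε₂ : 0 < ε₂ := by
    apply div_pos hc
    positivity
  -- uniform continuity of g' on K
  set K : Set ℝ := Set.Icc (y₀ - (|t₀| + 1)) (y₀ + (|t₀| + 1)) with hK
  have hKc : IsCompact K := isCompact_Icc
  have huc := hKc.uniformContinuousOn_of_continuous hg'c.continuousOn
  rw [Metric.uniformContinuousOn_iff] at huc
  obtain ⟨δ₂, hδ₂pos, hδ₂⟩ := huc ε₂ hε₂
  -- continuity of the integrand at (y₀, t₀)
  have hΦ : ContinuousAt (fun q : ℝ × ℝ => g (q.1 - q.2) * h q.2) (y₀, t₀) :=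
    ((hgc.comp (continuous_fst.sub continuous_snd)).mul (hh.comp continuous_snd)).continuousAt
  rw [Metric.continuousAt_iff] at hΦ
  obtain ⟨δ₁, hδ₁pos, hδ₁⟩ := hΦ (c/2) (half_pos hc)
  have hδ : 0 < min 1 (min δ₁ δ₂) := lt_min one_pos (lt_min hδ₁pos hδ₂pos)
  filter_upwards [Metric.ball_mem_nhds (0 : ℝ × ℝ) hδ] with v hv
  rw [mem_ball_zero_iff] at hv
  have hv1 : |v.1| ≤ ‖v‖ := norm_fst_le v
  have hv2 : |v.2| ≤ ‖v‖ := norm_snd_le v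
  have hv1' : |v.1| < 1 := lt_of_le_of_lt hv1 (lt_of_lt_of_le hv (min_le_left _ _))
  have hvδ₁ : ‖v‖ < δ₁ := lt_of_lt_of_le hv (le_trans (min_le_right _ _) (min_le_left _ _))
  have hvδ₂ : ‖v‖ < δ₂ := lt_of_lt_of_le hv (le_trans (min_le_right _ _) (min_le_right _ _))
  set y : ℝ := y₀ + v.1 with hy
  set t : ℝ := t₀ + v.2 with ht
  have hadd : (y₀, t₀) + v = (y, t) := rfl
  have hLv : ((A • ContinuousLinearMap.fst ℝ ℝ ℝ + B • ContinuousLinearMap.snd ℝ ℝ ℝ) : ℝ × ℝ →L[ℝ] ℝ) v = A * v.1 + B * v.2 := by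
    simp [ContinuousLinearMap.smul_apply, smul_eq_mul]
  -- split the integral
  have hsplit : (∫ s in (0:ℝ)..t, g (y - s) * h s)
      = (∫ s in (0:ℝ)..t₀, g (y - s) * h s) + ∫ s in t₀..t, g (y - s) * h s :=
    (intervalIntegral.integral_add_adjacent_intervals
      ((cY y).intervalIntegrable _ _) ((cY y).intervalIntegrable _ _)).symm
  have e1 : (∫ s in t₀..t, (g (y - s) * h s - B))
      = (∫ s in t₀..t, g (y - s) * h s) - v.2 * B := by
    rw [intervalIntegral.integral_sub ((cY y).intervalIntegrable _ _) intervalIntegrable_const,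
      intervalIntegral.integral_const, ht]
    simp [smul_eq_mul]
  have e2 : (∫ s in (0:ℝ)..t₀, ((g (y - s) - g (y₀ - s) - g' (y₀ - s) * v.1) * h s))
      = (∫ s in (0:ℝ)..t₀, g (y - s) * h s) - (∫ s in (0:ℝ)..t₀, g (y₀ - s) * h s)
        - A * v.1 := by
    have hrw : (fun s => (g (y - s) - g (y₀ - s) - g' (y₀ - s) * v.1) * h s)
        = fun s => g (y - s) * h s - g (y₀ - s) * h s - (g' (y₀ - s) * h s) * v.1 := by
      funext s; ring
    have c3 : Continuous fun s : ℝ => g' (y₀ - s) * h s :=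
      (hg'c.comp (continuous_const.sub continuous_id)).mul hh
    rw [hrw, intervalIntegral.integral_sub (f := fun s => g (y - s) * h s - g (y₀ - s) * h s)
        (g := fun s => g' (y₀ - s) * h s * v.1) (((cY y).sub (cY y₀)).intervalIntegrable _ _)
        ((c3.mul continuous_const).intervalIntegrable _ _),
      intervalIntegral.integral_sub ((cY y).intervalIntegrable _ _) ((cY y₀).intervalIntegrable _ _),
      intervalIntegral.integral_mul_const]
  -- T1 bound
  have hT1 : ‖∫ s in t₀..t, (g (y - s) * h s - B)‖ ≤ (c/2) * |v.2| := by
    have hptw : ∀ s ∈ Set.uIoc t₀ t, ‖g (y - s) * h s - B‖ ≤ c/2 := by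
      intro s hs
      have hmem := Set.mem_uIcc.mp (Set.uIoc_subset_uIcc hs)
      have hs' : |s - t₀| ≤ |v.2| := by
        rw [abs_le]
        rcases hmem with ⟨h1, h2⟩ | ⟨h1, h2⟩ <;> rcases abs_cases v.2 with ⟨he, h0⟩ | ⟨he, h0⟩ <;>
          constructor <;> (rw [he] <;> rw [ht] at * <;> try linarith) <;> linarith
      have hdist : dist (y, s) (y₀, t₀) < δ₁ := by
        rw [Prod.dist_eq]
        apply max_lt
        · rw [Real.dist_eq, hy]; simpa using lt_of_le_of_lt hv1 hvδ₁
        · rw [Real.dist_eq]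
          exact lt_of_le_of_lt (le_trans hs' hv2) hvδ₁
      have := hδ₁ hdist
      rw [Real.dist_eq] at this
      exact le_of_lt (by simpa [hB] using this)
    calc ‖∫ s in t₀..t, (g (y - s) * h s - B)‖ ≤ (c/2) * |t - t₀| :=
          intervalIntegral.norm_integral_le_of_norm_le_const hptw
      _ = (c/2) * |v.2| := by rw [ht]; ring_nf
  -- T2 bound
  have hT2 : ‖∫ s in (0:ℝ)..t₀, ((g (y - s) - g (y₀ - s) - g' (y₀ - s) * v.1) * h s)‖
      ≤ (ε₂ * |v.1| * Mh) * |t₀ - 0| := by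
    apply intervalIntegral.norm_integral_le_of_norm_le_const
    intro s hs
    have hmem := Set.mem_uIcc.mp (Set.uIoc_subset_uIcc hs)
    have hs' : |s| ≤ |t₀| := by
      rcases hmem with ⟨h1, h2⟩ | ⟨h1, h2⟩ <;> rcases abs_cases t₀ with ⟨he, h0⟩ | ⟨he, h0⟩ <;>
        rw [abs_le] <;> constructor <;> linarith
    have hsu : s ≤ |t₀| := le_trans (le_abs_self s) hs'
    have hsl : -(|t₀|) ≤ s := by have := neg_abs_le s; linarith
    have hy₀s : y₀ - s ∈ K := by
      rw [hK, Set.mem_Icc]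
      constructor <;> linarith
    have hys : y - s ∈ K := by
      rw [hy]
      have h1 : -(1:ℝ) < v.1 := by have := neg_abs_le v.1; linarith
      have h2 : v.1 < 1 := lt_of_le_of_lt (le_abs_self v.1) hv1'
      rw [hK, Set.mem_Icc]
      constructor <;> linarith
    have hsub : Set.uIcc (y₀ - s) (y - s) ⊆ K := (Set.ordConnected_Icc).uIcc_subset hy₀s hys
    have hbd : ∀ ξ ∈ Set.uIcc (y₀ - s) (y - s), ‖g' ξ - g' (y₀ - s)‖ ≤ ε₂ := by
      intro ξ hξ
      have hξK : ξ ∈ K := hsub hξ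
      have hξd : dist ξ (y₀ - s) < δ₂ := by
        rw [Real.dist_eq]
        have : |ξ - (y₀ - s)| ≤ |v.1| := by
          rcases Set.mem_uIcc.mp hξ with ⟨h1, h2⟩ | ⟨h1, h2⟩ <;>
            rcases abs_cases v.1 with ⟨he, h0⟩ | ⟨he, h0⟩ <;>
            rw [abs_le] <;> constructor <;> rw [hy] at * <;> linarith
        exact lt_of_le_of_lt this (lt_of_le_of_lt hv1 hvδ₂)
      have := hδ₂ ξ hξK (y₀ - s) hy₀s hξd
      rw [Real.dist_eq] at this
      exact le_of_lt this
    have hq : ∀ ξ ∈ Set.uIcc (y₀ - s) (y - s),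
        HasDerivWithinAt (fun ξ => g ξ - g' (y₀ - s) * ξ) (g' ξ - g' (y₀ - s))
          (Set.uIcc (y₀ - s) (y - s)) ξ := by
      intro ξ _
      exact ((hg.differentiable one_ne_zero ξ).hasDerivAt.sub
        (by simpa using (hasDerivAt_id ξ).const_mul (g' (y₀ - s)))).hasDerivWithinAt
    have hmvt := Convex.norm_image_sub_le_of_norm_hasDerivWithin_le hq hbd
      (convex_uIcc _ _) Set.left_mem_uIcc Set.right_mem_uIcc
    have emvt : ‖g (y - s) - g (y₀ - s) - g' (y₀ - s) * v.1‖ ≤ ε₂ * |v.1| := by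
      have e : g (y - s) - g (y₀ - s) - g' (y₀ - s) * v.1
          = (fun ξ => g ξ - g' (y₀ - s) * ξ) (y - s) - (fun ξ => g ξ - g' (y₀ - s) * ξ) (y₀ - s) := by
        simp only [hy]; ring
      have e2 : ‖(y - s) - (y₀ - s)‖ = |v.1| := by
        rw [Real.norm_eq_abs, hy]; ring_nf
      rw [e]
      calc ‖_ - _‖ ≤ ε₂ * ‖(y - s) - (y₀ - s)‖ := hmvt
        _ = ε₂ * |v.1| := by rw [e2]
    have hhs : ‖h s‖ ≤ Mh := hMh s ⟨by linarith, by linarith⟩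
    calc ‖(g (y - s) - g (y₀ - s) - g' (y₀ - s) * v.1) * h s‖
        = ‖g (y - s) - g (y₀ - s) - g' (y₀ - s) * v.1‖ * ‖h s‖ := norm_mul _ _
      _ ≤ (ε₂ * |v.1|) * Mh := by
          apply mul_le_mul emvt hhs (norm_nonneg _)
          positivity
      _ = ε₂ * |v.1| * Mh := by ring
  -- combine
  have hkey : ε₂ * (Mh * |t₀| + 1) = c / 2 := by
    rw [hε₂def]
    field_simp
  have hT2' : (ε₂ * |v.1| * Mh) * |t₀ - 0| ≤ (c/2) * ‖v‖ := by
    have h0 : |t₀ - 0| = |t₀| := by ring_nf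
    rw [h0]
    have : ε₂ * |v.1| * Mh * |t₀| = (ε₂ * (Mh * |t₀|)) * |v.1| := by ring
    rw [this]
    have h1 : ε₂ * (Mh * |t₀|) ≤ c / 2 := by nlinarith [hε₂.le]
    have h2 : (0:ℝ) ≤ c/2 := by linarith
    calc (ε₂ * (Mh * |t₀|)) * |v.1| ≤ (c/2) * |v.1| :=
          mul_le_mul_of_nonneg_right h1 (abs_nonneg _)
      _ ≤ (c/2) * ‖v‖ := mul_le_mul_of_nonneg_left hv1 h2
  calc ‖(fun z : ℝ × ℝ => ∫ s in (0:ℝ)..z.2, g (z.1 - s) * h s) ((y₀, t₀) + v)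
        - (fun z : ℝ × ℝ => ∫ s in (0:ℝ)..z.2, g (z.1 - s) * h s) (y₀, t₀)
        - (A • ContinuousLinearMap.fst ℝ ℝ ℝ + B • ContinuousLinearMap.snd ℝ ℝ ℝ) v‖
      = ‖(∫ s in t₀..t, (g (y - s) * h s - B))
          + ∫ s in (0:ℝ)..t₀, ((g (y - s) - g (y₀ - s) - g' (y₀ - s) * v.1) * h s)‖ := by
        rw [hadd, hLv]
        simp only
        rw [hsplit, e1, e2]
        congr 1
        ring
    _ ≤ ‖∫ s in t₀..t, (g (y - s) * h s - B)‖
          + ‖∫ s in (0:ℝ)..t₀, ((g (y - s) - g (y₀ - s) - g' (y₀ - s) * v.1) * h s)‖ :=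
        norm_add_le _ _
    _ ≤ (c/2) * |v.2| + (ε₂ * |v.1| * Mh) * |t₀ - 0| := add_le_add hT1 hT2
    _ ≤ (c/2) * ‖v‖ + (c/2) * ‖v‖ := add_le_add
        (mul_le_mul_of_nonneg_left hv2 (by linarith)) hT2'
    _ = c * ‖v‖ := by ring



variable {g u1 : ℝ → ℝ}

lemma renewalTerm_continuous (hgc : Continuous g) (hu1c : Continuous u1) (i : ℕ) :
    Continuous (renewalTerm g u1 i) := by
  induction i with
  | zero => exact hu1c
  | succ i ih =>
    show Continuous fun τ => ∫ s in (0:ℝ)..τ, g (τ - s) * renewalTerm g u1 i s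
    have huc : Continuous
        (Function.uncurry fun (τ : ℝ) (s : ℝ) => g (τ - s) * renewalTerm g u1 i s) :=
      (hgc.comp (continuous_fst.sub continuous_snd)).mul (ih.comp continuous_snd)
    exact intervalIntegral.continuous_parametric_intervalIntegral_of_continuous huc continuous_id

lemma renewalTerm_bound (hgc : Continuous g) (hu1c : Continuous u1) {M B : ℝ}
    (hM : ∀ x : ℝ, 0 ≤ x → |g x| ≤ M) (hB : ∀ x : ℝ, 0 ≤ x → |u1 x| ≤ B)
    (hM0 : 0 ≤ M) (hB0 : 0 ≤ B) (i : ℕ) :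
    ∀ τ : ℝ, 0 ≤ τ → |renewalTerm g u1 i τ| ≤ B * (M * τ)^i / i.factorial := by
  induction i with
  | zero => intro τ hτ; simpa [renewalTerm] using hB τ hτ
  | succ i ih =>
    intro τ hτ
    show |∫ s in (0:ℝ)..τ, g (τ - s) * renewalTerm g u1 i s| ≤ _
    set C : ℝ := M * B * M^i / i.factorial with hC
    have hC0 : 0 ≤ C := by positivity
    have hb : ∀ᵐ s ∂(volume.restrict (Set.uIoc 0 τ)),
        ‖g (τ - s) * renewalTerm g u1 i s‖ ≤ C * s^i := by
      apply ae_restrict_of_forall_mem measurableSet_uIoc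
      intro s hs
      rw [Set.uIoc_of_le hτ] at hs
      have hs0 : 0 ≤ s := hs.1.le
      have hsτ : s ≤ τ := hs.2
      have h1 : |g (τ - s)| ≤ M := hM _ (by linarith)
      have h2 : |renewalTerm g u1 i s| ≤ B * (M * s)^i / i.factorial := ih s hs0
      rw [norm_mul, Real.norm_eq_abs, Real.norm_eq_abs]
      calc |g (τ - s)| * |renewalTerm g u1 i s|
          ≤ M * (B * (M * s)^i / i.factorial) :=
            mul_le_mul h1 h2 (abs_nonneg _) hM0
        _ = C * s^i := by rw [hC, mul_pow]; ring
    have hint : IntervalIntegrable (fun s : ℝ => C * s^i) volume 0 τ :=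
      (continuous_const.mul (continuous_pow i)).intervalIntegrable _ _
    calc |∫ s in (0:ℝ)..τ, g (τ - s) * renewalTerm g u1 i s|
        ≤ |∫ s in (0:ℝ)..τ, C * s^i| :=
          intervalIntegral.norm_integral_le_abs_of_norm_le hb hint
      _ = B * (M * τ)^(i+1) / (i+1).factorial := by
          rw [intervalIntegral.integral_const_mul, integral_pow]
          rw [show ((0:ℝ))^(i+1) = 0 from zero_pow (Nat.succ_ne_zero i), sub_zero]
          have hnn : (0:ℝ) ≤ τ^(i+1)/((i:ℝ)+1) := by
            apply div_nonneg (pow_nonneg hτ _)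
            positivity
          rw [abs_of_nonneg (mul_nonneg hC0 hnn)]
          rw [Nat.factorial_succ, hC, mul_pow]
          push_cast
          have h1 : (i.factorial : ℝ) ≠ 0 := Nat.cast_ne_zero.2 i.factorial_ne_zero
          have h2 : ((i:ℝ) + 1) ≠ 0 := by positivity
          field_simp
          ring

lemma renewalTerm_congr {p u0 : ℝ → ℝ} (hpg : ∀ x : ℝ, 0 ≤ x → p x = g x)
    (hu : ∀ x : ℝ, 0 ≤ x → u0 x = u1 x) :
    ∀ (i : ℕ) (τ : ℝ), 0 ≤ τ → renewalTerm p u0 i τ = renewalTerm g u1 i τ := by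
  intro i
  induction i with
  | zero => exact hu
  | succ i ih =>
    intro τ hτ
    show (∫ s in (0:ℝ)..τ, p (τ - s) * renewalTerm p u0 i s)
        = ∫ s in (0:ℝ)..τ, g (τ - s) * renewalTerm g u1 i s
    apply intervalIntegral.integral_congr
    intro s hs
    rw [Set.uIcc_of_le hτ] at hs
    show p (τ - s) * renewalTerm p u0 i s = g (τ - s) * renewalTerm g u1 i s
    rw [hpg _ (by linarith [hs.2] : (0:ℝ) ≤ τ - s), ih s hs.1]

lemma renewalTerm_nonneg {p u0 : ℝ → ℝ} (hp : ∀ x : ℝ, 0 ≤ x → 0 ≤ p x)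
    (hu : ∀ x : ℝ, 0 ≤ x → 0 ≤ u0 x) :
    ∀ (i : ℕ) (τ : ℝ), 0 ≤ τ → 0 ≤ renewalTerm p u0 i τ := by
  intro i
  induction i with
  | zero => exact hu
  | succ i ih =>
    intro τ hτ
    show 0 ≤ ∫ s in (0:ℝ)..τ, p (τ - s) * renewalTerm p u0 i s
    apply intervalIntegral.integral_nonneg hτ
    intro s hs
    exact mul_nonneg (hp _ (by linarith [hs.2])) (ih s hs.1)

lemma renewalTerm_summable (hgc : Continuous g) (hu1c : Continuous u1) {M B : ℝ}
    (hM : ∀ x : ℝ, 0 ≤ x → |g x| ≤ M) (hB : ∀ x : ℝ, 0 ≤ x → |u1 x| ≤ B)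
    (hM0 : 0 ≤ M) (hB0 : 0 ≤ B) (τ : ℝ) (hτ : 0 ≤ τ) :
    Summable fun i => renewalTerm g u1 i τ := by
  apply Summable.of_norm_bounded (g := fun i : ℕ => B * ((M * τ)^i / i.factorial))
    ((Real.summable_pow_div_factorial (M * τ)).mul_left B)
  intro i
  rw [Real.norm_eq_abs]
  calc |renewalTerm g u1 i τ| ≤ B * (M * τ)^i / i.factorial :=
        renewalTerm_bound hgc hu1c hM hB hM0 hB0 i τ hτ
    _ = B * ((M * τ)^i / i.factorial) := by ring

lemma renewalDensity_continuousOn (hgc : Continuous g) (hu1c : Continuous u1) {M B : ℝ}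
    (hM : ∀ x : ℝ, 0 ≤ x → |g x| ≤ M) (hB : ∀ x : ℝ, 0 ≤ x → |u1 x| ≤ B)
    (hM0 : 0 ≤ M) (hB0 : 0 ≤ B) :
    ContinuousOn (fun τ => ∑' i, renewalTerm g u1 i τ) (Set.Ici 0) := by
  intro τ₀ hτ₀
  have hτ₀' : (0:ℝ) ≤ τ₀ := hτ₀
  set R : ℝ := τ₀ + 1 with hR
  have hcont : ContinuousOn (fun τ => ∑' i, renewalTerm g u1 i τ) (Set.Icc 0 R) := by
    have hb : ∀ (i : ℕ), ∀ τ ∈ Set.Icc (0:ℝ) R,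
        ‖renewalTerm g u1 i τ‖ ≤ B * (M * R)^i / i.factorial := by
      intro i τ hτ
      rw [Real.norm_eq_abs]
      calc |renewalTerm g u1 i τ| ≤ B * (M * τ)^i / i.factorial :=
            renewalTerm_bound hgc hu1c hM hB hM0 hB0 i τ hτ.1
        _ ≤ B * (M * R)^i / i.factorial := by
            have h := pow_le_pow_left₀ (mul_nonneg hM0 hτ.1)
              (mul_le_mul_of_nonneg_left hτ.2 hM0) i
            exact div_le_div_of_nonneg_right
              (mul_le_mul_of_nonneg_left h hB0) (Nat.cast_nonneg _)
    have hsum : Summable (fun i : ℕ => B * (M * R)^i / i.factorial) := by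
      have := (Real.summable_pow_div_factorial (M * R)).mul_left B
      simpa [mul_div_assoc] using this
    apply (tendstoUniformlyOn_tsum hsum hb).continuousOn
    apply Filter.Frequently.of_forall
    intro N
    exact (continuous_finset_sum N fun i _ => renewalTerm_continuous hgc hu1c i).continuousOn
  have hmem : Set.Icc (0:ℝ) R ∈ 𝓝[Set.Ici 0] τ₀ := by
    rw [show Set.Icc (0:ℝ) R = Set.Ici 0 ∩ Set.Iic R from (Set.Ici_inter_Iic).symm]
    exact inter_mem_nhdsWithin _ (Iic_mem_nhds (by linarith))
  exact (hcont τ₀ ⟨hτ₀', by linarith⟩).mono_of_mem_nhdsWithin hmem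

lemma renewal_identity (hgc : Continuous g) (hu1c : Continuous u1) {M B : ℝ}
    (hM : ∀ x : ℝ, 0 ≤ x → |g x| ≤ M) (hB : ∀ x : ℝ, 0 ≤ x → |u1 x| ≤ B)
    (hM0 : 0 ≤ M) (hB0 : 0 ≤ B) (τ : ℝ) (hτ : 0 ≤ τ) :
    (∑' i, renewalTerm g u1 i τ)
      = u1 τ + ∫ s in (0:ℝ)..τ, g (τ - s) * ∑' i, renewalTerm g u1 i s := by
  set c : ℕ → ℝ := fun i => M * (B * (M * τ)^i / i.factorial) with hc
  have hc0 : ∀ i, 0 ≤ c i := fun i => by positivity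
  have hcsum : Summable c := by
    rw [hc]
    have := ((Real.summable_pow_div_factorial (M * τ)).mul_left B).mul_left M
    simpa [mul_div_assoc] using this
  have hswap : (∫ s in (0:ℝ)..τ, g (τ - s) * ∑' i, renewalTerm g u1 i s)
      = ∑' i, ∫ s in (0:ℝ)..τ, g (τ - s) * renewalTerm g u1 i s := by
    have hpt : ∀ s : ℝ, g (τ - s) * (∑' i, renewalTerm g u1 i s)
        = ∑' i, g (τ - s) * renewalTerm g u1 i s := fun s => tsum_mul_left.symm
    simp_rw [hpt]
    rw [intervalIntegral.integral_of_le hτ]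
    rw [MeasureTheory.integral_tsum]
    · simp_rw [← intervalIntegral.integral_of_le hτ]
    · intro i
      exact ((hgc.comp (continuous_const.sub continuous_id)).mul
        (renewalTerm_continuous hgc hu1c i)).aestronglyMeasurable
    · apply ne_top_of_le_ne_top (b := ∑' i, ENNReal.ofReal (c i) * volume (Set.Ioc (0:ℝ) τ))
      · rw [ENNReal.tsum_mul_right, ← ENNReal.ofReal_tsum_of_nonneg hc0 hcsum]
        exact ENNReal.mul_ne_top ENNReal.ofReal_ne_top (measure_Ioc_lt_top).ne
      · apply ENNReal.tsum_le_tsum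
        intro i
        calc ∫⁻ s in Set.Ioc (0:ℝ) τ, ↑‖g (τ - s) * renewalTerm g u1 i s‖₊
            ≤ ∫⁻ _ in Set.Ioc (0:ℝ) τ, ENNReal.ofReal (c i) := by
              apply setLIntegral_mono measurable_const
              intro s hs
              have hs0 : 0 ≤ s := hs.1.le
              have hsτ : s ≤ τ := hs.2
              rw [← enorm_eq_nnnorm, ← ofReal_norm_eq_enorm]
              apply ENNReal.ofReal_le_ofReal
              rw [norm_mul, Real.norm_eq_abs, Real.norm_eq_abs]
              have h1 : |g (τ - s)| ≤ M := hM _ (by linarith)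
              have h2 : |renewalTerm g u1 i s| ≤ B * (M * s)^i / i.factorial :=
                renewalTerm_bound hgc hu1c hM hB hM0 hB0 i s hs0
              have h3 : B * (M * s)^i / i.factorial ≤ B * (M * τ)^i / i.factorial := by
                have h := pow_le_pow_left₀ (mul_nonneg hM0 hs0)
                  (mul_le_mul_of_nonneg_left hsτ hM0) i
                exact div_le_div_of_nonneg_right
                  (mul_le_mul_of_nonneg_left h hB0) (Nat.cast_nonneg _)
              calc |g (τ - s)| * |renewalTerm g u1 i s|
                  ≤ M * (B * (M * τ)^i / i.factorial) :=
                    mul_le_mul h1 (le_trans h2 h3) (abs_nonneg _) hM0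
                _ = c i := rfl
          _ = ENNReal.ofReal (c i) * volume (Set.Ioc (0:ℝ) τ) := by
              rw [setLIntegral_const]
  rw [hswap]
  have hsummable : Summable fun i => renewalTerm g u1 i τ :=
    renewalTerm_summable hgc hu1c hM hB hM0 hB0 τ hτ
  rw [hsummable.tsum_eq_zero_add]
  rfl

/-- For continuous `p ∈ 𝒞` and `u0 ∈ 𝒞`, the function
`u(x,τ) = u0(x+τ) + ∫_0^τ p(x+τ−s) α(s) ds` is a strong solution of the
Kolmogorov forward equation with initial data `u0`. -/
theorem stmt0 (p u0 : ℝ → ℝ) (hp : MemC p) (hpc : ContinuousOn p (Set.Ici 0))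
    (hu0 : MemC u0) (u : ℝ → ℝ → ℝ)
    (hu : ∀ x τ : ℝ, u x τ =
      u0 (x + τ) + ∫ s in (0 : ℝ)..τ, p (x + τ - s) * renewalDensity p u0 s) :
    IsStrongSolution p u ∧ ∀ x : ℝ, u x 0 = u0 x := by
  obtain ⟨hp1, hp2, hp3, hp4, hp5⟩ := hp
  obtain ⟨hq1, hq2, hq3, hq4, hq5⟩ := hu0
  -- extensions
  obtain ⟨g, hg, hgp⟩ := exists_contDiff_ext hp1
  obtain ⟨u1, hu1, hu1e⟩ := exists_contDiff_ext hq1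
  obtain ⟨M, hM0, hMp⟩ := exists_bound_Ici hpc hp5
  obtain ⟨B, hB0, hBu⟩ := exists_bound_Ici (hq1.continuousOn) hq5
  have hM : ∀ x : ℝ, 0 ≤ x → |g x| ≤ M := fun x hx => by rw [hgp x hx]; exact hMp x hx
  have hB : ∀ x : ℝ, 0 ≤ x → |u1 x| ≤ B := fun x hx => by rw [hu1e x hx]; exact hBu x hx
  have hgc : Continuous g := hg.continuous
  have hu1c : Continuous u1 := hu1.continuous
  -- the renewal density built from the extensions
  set α' : ℝ → ℝ := fun τ => ∑' i, renewalTerm g u1 i τ with hα'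
  have hαc : ContinuousOn α' (Set.Ici 0) :=
    renewalDensity_continuousOn hgc hu1c hM hB hM0 hB0
  set ᾱ : ℝ → ℝ := fun s => α' (max s 0) with hᾱ
  have hᾱc : Continuous ᾱ :=
    hαc.comp_continuous (continuous_id.max continuous_const) (fun x => le_max_right x 0)
  have hᾱeq : ∀ s : ℝ, 0 ≤ s → ᾱ s = α' s := fun s hs => by
    rw [hᾱ]; simp [max_eq_left hs]
  have hαd : ∀ s : ℝ, 0 ≤ s → renewalDensity p u0 s = α' s := fun s hs =>
    tsum_congr fun i =>
      renewalTerm_congr (fun x hx => (hgp x hx).symm) (fun x hx => (hu1e x hx).symm) i s hs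
  -- the smooth global version of u
  set J : ℝ × ℝ → ℝ := fun w => ∫ s in (0:ℝ)..w.2, g (w.1 - s) * ᾱ s with hJ
  have hJd : ∀ w : ℝ × ℝ, HasFDerivAt J
      ((∫ s in (0:ℝ)..w.2, deriv g (w.1 - s) * ᾱ s) • ContinuousLinearMap.fst ℝ ℝ ℝ +
        (g (w.1 - w.2) * ᾱ w.2) • ContinuousLinearMap.snd ℝ ℝ ℝ) w := fun w =>
    hasFDerivAt_conv hg hᾱc w.1 w.2
  have hJ1 : ContDiff ℝ 1 J := by
    rw [contDiff_one_iff_fderiv]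
    refine ⟨fun w => (hJd w).differentiableAt, ?_⟩
    have hfd : (fderiv ℝ J) = fun w : ℝ × ℝ =>
        ((∫ s in (0:ℝ)..w.2, deriv g (w.1 - s) * ᾱ s) • ContinuousLinearMap.fst ℝ ℝ ℝ +
          (g (w.1 - w.2) * ᾱ w.2) • ContinuousLinearMap.snd ℝ ℝ ℝ) :=
      funext fun w => (hJd w).fderiv
    rw [hfd]
    apply Continuous.add
    · exact (continuous_conv_param (hg.continuous_deriv le_rfl) hᾱc).smul continuous_const
    · exact ((hgc.comp (continuous_fst.sub continuous_snd)).mul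
        (hᾱc.comp continuous_snd)).smul continuous_const
  set vfun : ℝ × ℝ → ℝ := fun z => u1 (z.1 + z.2) + J (z.1 + z.2, z.2) with hvfun
  have hv1 : ContDiff ℝ 1 vfun :=
    (hu1.comp (contDiff_fst.add contDiff_snd)).add
      (hJ1.comp ((contDiff_fst.add contDiff_snd).prodMk contDiff_snd))
  have huv : ∀ x : ℝ, 0 ≤ x → ∀ t : ℝ, 0 ≤ t → u x t = vfun (x, t) := by
    intro x hx t ht
    rw [hu x t]
    have e1 : u0 (x + t) = u1 (x + t) := (hu1e _ (by linarith)).symm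
    have e2 : (∫ s in (0:ℝ)..t, p (x + t - s) * renewalDensity p u0 s)
        = ∫ s in (0:ℝ)..t, g (x + t - s) * ᾱ s := by
      apply intervalIntegral.integral_congr
      intro s hs
      rw [Set.uIcc_of_le ht] at hs
      have h1 : (0:ℝ) ≤ x + t - s := by linarith [hs.2]
      show p (x + t - s) * renewalDensity p u0 s = g (x + t - s) * ᾱ s
      rw [← hgp _ h1, hαd s hs.1, ← hᾱeq s hs.1]
    rw [e1, e2]
  -- the value of u at x = 0 is the renewal density
  have hu0τ : ∀ τ : ℝ, 0 ≤ τ → u 0 τ = α' τ := by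
    intro τ hτ
    rw [huv 0 le_rfl τ hτ]
    show u1 (0 + τ) + J (0 + τ, τ) = α' τ
    rw [zero_add]
    have e3 : J (τ, τ) = ∫ s in (0:ℝ)..τ, g (τ - s) * α' s := by
      apply intervalIntegral.integral_congr
      intro s hs
      rw [Set.uIcc_of_le hτ] at hs
      show g (τ - s) * ᾱ s = g (τ - s) * α' s
      rw [hᾱeq s hs.1]
    rw [e3]
    exact (renewal_identity hgc hu1c hM hB hM0 hB0 τ hτ).symm
  have hux0 : ∀ x : ℝ, u x 0 = u0 x := by
    intro x
    rw [hu x 0, intervalIntegral.integral_same, add_zero, add_zero]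
  refine ⟨⟨?_, ?_, ?_, ?_⟩, hux0⟩
  · -- joint C¹ regularity
    apply (hv1.contDiffOn).congr
    rintro ⟨x, t⟩ hz
    exact huv x hz.1 t hz.2
  · -- nonnegativity
    intro x hx τ hτ
    rw [hu x τ]
    have h1 : 0 ≤ u0 (x + τ) := (hq3 _ (by simp only [Set.mem_Ici] at hx hτ ⊢; linarith)).le
    have h2 : 0 ≤ ∫ s in (0:ℝ)..τ, p (x + τ - s) * renewalDensity p u0 s := by
      apply intervalIntegral.integral_nonneg hτ
      intro s hs
      apply mul_nonneg
      · exact (hp3 _ (by simp only [Set.mem_Ici] at hx ⊢; linarith [hs.2])).le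
      · exact tsum_nonneg fun i =>
          renewalTerm_nonneg (fun y hy => (hp3 y hy).le) (fun y hy => (hq3 y hy).le) i s hs.1
    linarith
  · -- initial condition in the class
    have : (fun x => u x 0) = u0 := funext hux0
    rw [this]
    exact ⟨hq1, hq2, hq3, hq4, hq5⟩
  · -- the PDE
    intro x hx τ hτ
    rw [Set.mem_Ici] at hx hτ
    set A' : ℝ := ∫ s in (0:ℝ)..τ, deriv g (x + τ - s) * ᾱ s with hA'
    -- τ-derivative
    have hcurve_t : HasDerivAt (fun t : ℝ => ((x + t : ℝ), (t : ℝ))) ((1:ℝ), (1:ℝ)) τ :=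
      (((hasDerivAt_id τ).const_add x)).prodMk (hasDerivAt_id τ)
    have hJt : HasDerivAt (fun t : ℝ => J (x + t, t)) (A' + g x * ᾱ τ) τ := by
      have h := HasFDerivAt.comp_hasDerivAt (f := fun t : ℝ => ((x + t : ℝ), (t : ℝ)))
        τ (hJd (x + τ, τ)) hcurve_t
      simpa [hA', ContinuousLinearMap.smul_apply, smul_eq_mul, add_sub_cancel_right, Function.comp_def] using h
    have hu1t : HasDerivAt (fun t : ℝ => u1 (x + t)) (deriv u1 (x + τ)) τ := by
      have h0 : HasDerivAt u1 (deriv u1 (x + τ)) (x + τ) :=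
        (hu1.differentiable one_ne_zero _).hasDerivAt
      simpa [Function.comp_def] using h0.comp τ ((hasDerivAt_id τ).const_add x)
    have hvt : HasDerivAt (fun t : ℝ => vfun (x, t)) (deriv u1 (x + τ) + (A' + g x * ᾱ τ)) τ :=
      hu1t.add hJt
    have hDt : derivWithin (fun t => u x t) (Set.Ici 0) τ
        = deriv u1 (x + τ) + (A' + g x * ᾱ τ) := by
      apply HasDerivWithinAt.derivWithin _ (uniqueDiffOn_Ici 0 τ hτ)
      exact (hvt.hasDerivWithinAt).congr (fun t ht => huv x hx t ht) (huv x hx τ hτ)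
    -- x-derivative
    have hcurve_x : HasDerivAt (fun y : ℝ => ((y + τ : ℝ), (τ : ℝ))) ((1:ℝ), (0:ℝ)) x :=
      ((hasDerivAt_id x).add_const τ).prodMk (hasDerivAt_const x τ)
    have hJx : HasDerivAt (fun y : ℝ => J (y + τ, τ)) A' x := by
      have h := HasFDerivAt.comp_hasDerivAt (f := fun y : ℝ => ((y + τ : ℝ), (τ : ℝ)))
        x (hJd (x + τ, τ)) hcurve_x
      simpa [hA', ContinuousLinearMap.smul_apply, smul_eq_mul, Function.comp_def] using h
    have hu1x : HasDerivAt (fun y : ℝ => u1 (y + τ)) (deriv u1 (x + τ)) x := by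
      have h0 : HasDerivAt u1 (deriv u1 (x + τ)) (x + τ) :=
        (hu1.differentiable one_ne_zero _).hasDerivAt
      simpa [Function.comp_def] using h0.comp x ((hasDerivAt_id x).add_const τ)
    have hvx : HasDerivAt (fun y : ℝ => vfun (y, τ)) (deriv u1 (x + τ) + A') x :=
      hu1x.add hJx
    have hDx : derivWithin (fun y => u y τ) (Set.Ici 0) x = deriv u1 (x + τ) + A' := by
      apply HasDerivWithinAt.derivWithin _ (uniqueDiffOn_Ici 0 x hx)
      exact (hvx.hasDerivWithinAt).congr (fun y hy => huv y hy τ hτ) (huv x hx τ hτ)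
    rw [hDt, hDx, hu0τ τ hτ, hᾱeq τ hτ, ← hgp x hx]
    ring
end

section
/- Let p ∈ C be continuous. If u and v are both strong solutions of the Kolmogorov forward equation for residual times with holding time density p and with the same initial data u(·,0) = v(·,0) = u0 ∈ C, then u(x,τ) = v(x,τ) for all x, τ ≥ 0. -/
open MeasureTheory Set Filter Topology

lemma sol_fderiv (p : ℝ → ℝ) (u : ℝ → ℝ → ℝ) (hu : IsStrongSolution p u)
    {x τ : ℝ} (hx : 0 < x) (hτ : 0 < τ) :
    fderiv ℝ (fun z : ℝ × ℝ => u z.1 z.2) (x, τ) (-1, 1) = p x * u 0 τ := by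
  set F : ℝ × ℝ → ℝ := fun z => u z.1 z.2 with hF
  have hmem : (Ici (0:ℝ) ×ˢ Ici (0:ℝ)) ∈ 𝓝 ((x, τ) : ℝ × ℝ) :=
    prod_mem_nhds (Ici_mem_nhds hx) (Ici_mem_nhds hτ)
  have hdiff : DifferentiableAt ℝ F (x, τ) :=
    (hu.1.contDiffAt hmem).differentiableAt one_ne_zero
  have h1 : HasDerivAt (fun t => u x t) (fderiv ℝ F (x, τ) (0, 1)) τ := by
    have hl : HasDerivAt (fun t : ℝ => ((x, t) : ℝ × ℝ)) (((0:ℝ), (1:ℝ)) : ℝ × ℝ) τ :=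
      HasDerivAt.prodMk (hasDerivAt_const τ x) (hasDerivAt_id τ)
    exact hdiff.hasFDerivAt.comp_hasDerivAt τ hl
  have h2 : HasDerivAt (fun y => u y τ) (fderiv ℝ F (x, τ) (1, 0)) x := by
    have hl : HasDerivAt (fun y : ℝ => ((y, τ) : ℝ × ℝ)) (((1:ℝ), (0:ℝ)) : ℝ × ℝ) x :=
      HasDerivAt.prodMk (hasDerivAt_id x) (hasDerivAt_const x τ)
    exact hdiff.hasFDerivAt.comp_hasDerivAt x hl
  have hpde := hu.2.2.2 x hx.le τ hτ.le
  rw [derivWithin_of_mem_nhds (Ici_mem_nhds hτ), derivWithin_of_mem_nhds (Ici_mem_nhds hx),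
      h1.deriv, h2.deriv] at hpde
  have heq : ((-1 : ℝ), (1 : ℝ)) = (((0:ℝ),(1:ℝ)) : ℝ × ℝ) - ((1:ℝ),(0:ℝ)) := by
    simp [Prod.ext_iff]
  rw [heq, map_sub]
  exact hpde


/-- Uniqueness of strong solutions: if `u` and `v` are strong
solutions for the same continuous holding time density `p ∈ 𝒞` and the same
initial data `u0 ∈ 𝒞`, then `u = v` on `ℝ₊ × ℝ₊`. -/
theorem stmt1 (p u0 : ℝ → ℝ) (hp : MemC p) (hpc : ContinuousOn p (Set.Ici 0))
    (hu0 : MemC u0) (u v : ℝ → ℝ → ℝ)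
    (hu : IsStrongSolution p u) (hv : IsStrongSolution p v)
    (hu0eq : ∀ x : ℝ, u x 0 = u0 x) (hv0eq : ∀ x : ℝ, v x 0 = u0 x) :
    ∀ x ∈ Set.Ici (0 : ℝ), ∀ τ ∈ Set.Ici (0 : ℝ), u x τ = v x τ := by
  set F : ℝ × ℝ → ℝ := fun z => u z.1 z.2 - v z.1 z.2 with hFdef
  have hC1 : ContDiffOn ℝ 1 F (Ici 0 ×ˢ Ici 0) := hu.1.sub hv.1
  have hcontF : ContinuousOn F (Ici 0 ×ˢ Ici 0) := hC1.continuousOn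
  set a : ℝ → ℝ := fun t => u 0 t - v 0 t with hadef
  have hw0 : ∀ y : ℝ, F (y, 0) = 0 := by
    intro y; simp [hFdef, hu0eq y, hv0eq y]
  -- continuity of a on Ici 0
  have hacont : ContinuousOn a (Ici 0) := by
    have hmap : ∀ t ∈ Ici (0:ℝ), ((0:ℝ), t) ∈ (Ici (0:ℝ) ×ˢ Ici (0:ℝ)) := by
      intro t ht; exact ⟨self_mem_Ici, ht⟩
    exact hcontF.comp (by fun_prop) hmap
  -- fderiv identity for F at interior points
  have hfd : ∀ {y s : ℝ}, 0 < y → 0 < s →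
      fderiv ℝ F (y, s) (-1, 1) = p y * a s := by
    intro y s hy hs
    have hmem : (Ici (0:ℝ) ×ˢ Ici (0:ℝ)) ∈ 𝓝 ((y, s) : ℝ × ℝ) :=
      prod_mem_nhds (Ici_mem_nhds hy) (Ici_mem_nhds hs)
    have hdu : DifferentiableAt ℝ (fun z : ℝ × ℝ => u z.1 z.2) (y, s) :=
      (hu.1.contDiffAt hmem).differentiableAt one_ne_zero
    have hdv : DifferentiableAt ℝ (fun z : ℝ × ℝ => v z.1 z.2) (y, s) :=
      (hv.1.contDiffAt hmem).differentiableAt one_ne_zero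
    have : fderiv ℝ F (y, s) =
        fderiv ℝ (fun z : ℝ × ℝ => u z.1 z.2) (y, s)
          - fderiv ℝ (fun z : ℝ × ℝ => v z.1 z.2) (y, s) := fderiv_sub hdu hdv
    rw [this, ContinuousLinearMap.sub_apply, sol_fderiv p u hu hy hs,
      sol_fderiv p v hv hy hs, hadef]
    ring
  -- the characteristic identity
  have key : ∀ y, 0 ≤ y → ∀ s, 0 ≤ s →
      F (y, s) = ∫ t in (0:ℝ)..s, p (y + s - t) * a t := by
    intro y hy s hs
    rcases eq_or_lt_of_le hs with hs0 | hs
    · simp [← hs0, hw0 y]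
    set g : ℝ → ℝ := fun t => F (y + s - t, t) with hgdef
    have hgcont : ContinuousOn g (Icc 0 s) := by
      apply hcontF.comp (by fun_prop)
      intro t ht
      exact ⟨by simp; linarith [ht.1, ht.2], ht.1⟩
    have hg' : ∀ t ∈ Ioo (0:ℝ) s, HasDerivAt g (p (y + s - t) * a t) t := by
      intro t ht
      have h1 : 0 < y + s - t := by linarith [ht.2]
      have hmem : (Ici (0:ℝ) ×ˢ Ici (0:ℝ)) ∈ 𝓝 ((y + s - t, t) : ℝ × ℝ) :=
        prod_mem_nhds (Ici_mem_nhds h1) (Ici_mem_nhds ht.1)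
      have hdiff : DifferentiableAt ℝ F (y + s - t, t) :=
        (hC1.contDiffAt hmem).differentiableAt one_ne_zero
      have hl : HasDerivAt (fun t : ℝ => ((y + s - t, t) : ℝ × ℝ))
          (((-1:ℝ), (1:ℝ)) : ℝ × ℝ) t := by
        have h1' : HasDerivAt (fun t : ℝ => y + s - t) (-1) t := by
          simpa using ((hasDerivAt_id t).const_sub (y + s))
        exact HasDerivAt.prodMk h1' (hasDerivAt_id t)
      have hcomp : HasDerivAt (F ∘ fun t' : ℝ => ((y + s - t', t') : ℝ × ℝ))
          (fderiv ℝ F (y + s - t, t) (-1, 1)) t :=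
        HasFDerivAt.comp_hasDerivAt_of_eq (f := fun t' : ℝ => ((y + s - t', t') : ℝ × ℝ))
          (x := t) hdiff.hasFDerivAt hl rfl
      rw [hfd h1 ht.1] at hcomp
      exact hcomp
    have hintg : IntervalIntegrable (fun t => p (y + s - t) * a t) volume 0 s := by
      apply ContinuousOn.intervalIntegrable
      rw [uIcc_of_le hs.le]
      apply ContinuousOn.mul
      · apply hpc.comp (by fun_prop)
        intro t ht; simp; linarith [ht.1, ht.2]
      · exact hacont.mono (Icc_subset_Ici_self)
    have := intervalIntegral.integral_eq_sub_of_hasDeriv_right_of_le hs.le hgcont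
      (fun t ht => (hg' t ht).hasDerivWithinAt) hintg
    have hg0 : g 0 = 0 := by simpa [hgdef] using hw0 (y + s)
    have hgs : g s = F (y, s) := by simp [hgdef]
    rw [this, hg0, hgs, sub_zero]
  -- the renewal equation for a
  have aeq : ∀ s, 0 ≤ s → a s = ∫ t in (0:ℝ)..s, p (s - t) * a t := by
    intro s hs
    have := key 0 le_rfl s hs
    simpa [hFdef, hadef] using this
  -- a vanishes on [0, ∞)
  have haz : ∀ t, 0 ≤ t → a t = 0 := by
    intro T hT
    obtain ⟨M, hM⟩ := (isCompact_Icc : IsCompact (Icc (0:ℝ) T)).exists_bound_of_continuousOn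
      (hpc.mono (Icc_subset_Ici_self))
    have hM0 : 0 ≤ M := le_trans (norm_nonneg _) (hM 0 ⟨le_rfl, hT⟩)
    set b : ℝ → ℝ := fun t => |a (max t 0)| with hbdef
    have hbc : Continuous b := by
      apply Continuous.abs
      apply hacont.comp_continuous (by fun_prop)
      intro t; exact le_max_right t 0
    have hbnn : ∀ t, 0 ≤ b t := fun t => abs_nonneg _
    have hbeq : ∀ t, 0 ≤ t → b t = |a t| := by
      intro t ht; simp [hbdef, max_eq_left ht]
    set A : ℝ → ℝ := fun t => ∫ r in (0:ℝ)..t, b r with hAdef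
    have hA' : ∀ t, HasDerivAt A (b t) t := fun t =>
      (hbc.integral_hasStrictDerivAt 0 t).hasDerivAt
    have hAnn : ∀ t, 0 ≤ t → 0 ≤ A t := by
      intro t ht
      exact intervalIntegral.integral_nonneg ht (fun r _ => hbnn r)
    have habd : ∀ t ∈ Icc (0:ℝ) T, |a t| ≤ M * A t := by
      intro t ht
      rw [aeq t ht.1]
      calc |∫ r in (0:ℝ)..t, p (t - r) * a r|
          ≤ ∫ r in (0:ℝ)..t, |p (t - r) * a r| :=
            intervalIntegral.abs_integral_le_integral_abs ht.1
        _ ≤ ∫ r in (0:ℝ)..t, M * b r := by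
            apply intervalIntegral.integral_mono_on ht.1
            · apply IntervalIntegrable.abs
              apply ContinuousOn.intervalIntegrable
              rw [uIcc_of_le ht.1]
              apply ContinuousOn.mul
              · apply hpc.comp (by fun_prop)
                intro r hr; simp; linarith [hr.1, hr.2]
              · exact hacont.mono (Icc_subset_Ici_self)
            · exact (hbc.const_smul M).intervalIntegrable 0 t
            · intro r hr
              rw [hbeq r hr.1, abs_mul]
              apply mul_le_mul_of_nonneg_right _ (abs_nonneg _)
              have : t - r ∈ Icc (0:ℝ) T := ⟨by linarith [hr.2], by linarith [hr.1, ht.2]⟩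
              simpa using hM _ this
        _ = M * A t := by rw [hAdef]; exact (intervalIntegral.integral_const_mul M b ▸ rfl)
    have hgron := norm_le_gronwallBound_of_norm_deriv_right_le
      (f := A) (f' := b) (δ := 0) (K := M) (ε := 0) (a := 0) (b := T)
      (fun t _ => (hA' t).continuousAt.continuousWithinAt)
      (fun t _ => (hA' t).hasDerivWithinAt)
      (by simp [hAdef])
      (by
        intro t ht
        rw [Real.norm_eq_abs, Real.norm_eq_abs, abs_of_nonneg (hbnn t),
          abs_of_nonneg (hAnn t ht.1), hbeq t ht.1]
        simpa using habd t ⟨ht.1, ht.2.le⟩)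
    have hAT : A T = 0 := by
      have h0 := hgron T ⟨hT, le_rfl⟩
      have h' : |A T| ≤ 0 := by
        calc |A T| = ‖A T‖ := (Real.norm_eq_abs _).symm
          _ ≤ gronwallBound 0 M 0 (T - 0) := h0
          _ = 0 := by rw [gronwallBound_ε0]; simp
      exact abs_nonpos_iff.mp h'
    have := habd T ⟨hT, le_rfl⟩
    rw [hAT] at this
    simpa using abs_nonpos_iff.mp (by linarith [this])
  -- conclude
  intro x hx τ hτ
  have := key x hx τ hτ
  have hz : (∫ t in (0:ℝ)..τ, p (x + τ - t) * a t) = 0 := by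
    have hEq : EqOn (fun t => p (x + τ - t) * a t) (fun _ => (0:ℝ)) (uIcc 0 τ) := by
      intro t ht
      rw [uIcc_of_le hτ] at ht
      simp [haz t ht.1]
    rw [intervalIntegral.integral_congr hEq, intervalIntegral.integral_zero]
  rw [hz] at this
  have : u x τ - v x τ = 0 := this
  linarith
end

section
/- Let p ∈ C be continuous, u0 ∈ C, α(τ) = Σ_{i≥0} (u0 * p^{*(i)})(τ), and let u(x,τ) = u0(x+τ) + ∫_0^τ p(x+τ−s) α(s) ds be the strong solution. Then for every complex q with Re q > 0 and every τ ≥ 0, the spatial Laplace transform û(q,τ) = ∫_0^∞ e^{-qx} u(x,τ) dx satisfies û(q,τ) = e^{qτ} û0(q) + (p̂(q) − 1) ∫_0^τ e^{q(τ−s)} α(s) ds. -/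
open MeasureTheory Set Filter Topology

/-- The Laplace transform `f̂(q) = ∫_0^∞ e^{-qx} f(x) dx` of a function on
`ℝ₊ = [0,∞)`, for complex `q`. -/
noncomputable def laplaceFn (f : ℝ → ℝ) (q : ℂ) : ℂ :=
  ∫ x in Set.Ici (0 : ℝ), Complex.exp (-q * (x : ℂ)) * (f x : ℂ)

section RT

variable {P U : ℝ → ℝ}

lemma rt_cont (hP : Continuous P) (hU : Continuous U) (i : ℕ) :
    Continuous (renewalTerm P U i) := by
  induction i with
  | zero => exact hU
  | succ i ih =>
    show Continuous fun τ => ∫ s in (0:ℝ)..τ, P (τ - s) * renewalTerm P U i s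
    have hc : Continuous (Function.uncurry fun (τ s : ℝ) => P (τ - s) * renewalTerm P U i s) := by
      show Continuous fun z : ℝ × ℝ => P (z.1 - z.2) * renewalTerm P U i z.2
      exact (hP.comp (continuous_fst.sub continuous_snd)).mul (ih.comp continuous_snd)
    exact intervalIntegral.continuous_parametric_intervalIntegral_of_continuous hc continuous_id

lemma rt_bound {T M C : ℝ} (hM0 : 0 ≤ M) (hC0 : 0 ≤ C)
    (hM : ∀ t ∈ Icc (0:ℝ) T, |U t| ≤ M) (hC : ∀ t ∈ Icc (0:ℝ) T, |P t| ≤ C) :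
    ∀ i, ∀ τ ∈ Icc (0:ℝ) T, |renewalTerm P U i τ| ≤ M * C ^ i * τ ^ i / i.factorial := by
  intro i
  induction i with
  | zero => intro τ hτ; simpa [renewalTerm] using hM τ hτ
  | succ i ih =>
    intro τ hτ
    obtain ⟨hτ0, hτT⟩ := hτ
    have key : ∀ s ∈ Icc (0:ℝ) τ, |P (τ - s) * renewalTerm P U i s| ≤
        C * (M * C ^ i * s ^ i / i.factorial) := by
      intro s hs
      rw [abs_mul]
      have h1 : |P (τ - s)| ≤ C := hC _ ⟨by linarith [hs.1, hs.2], by linarith [hs.1, hs.2]⟩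
      have h2 : |renewalTerm P U i s| ≤ M * C ^ i * s ^ i / i.factorial :=
        ih s ⟨hs.1, le_trans hs.2 hτT⟩
      exact mul_le_mul h1 h2 (abs_nonneg _) hC0
    have hcont : Continuous fun s => M * C ^ i * s ^ i / (i.factorial : ℝ) := by fun_prop
    have hbig : |∫ s in (0:ℝ)..τ, P (τ - s) * renewalTerm P U i s| ≤
        |∫ s in (0:ℝ)..τ, C * (M * C ^ i * s ^ i / i.factorial)| := by
      rw [← Real.norm_eq_abs]
      apply intervalIntegral.norm_integral_le_abs_of_norm_le (g := fun s => C * (M * C ^ i * s ^ i / i.factorial))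
      · filter_upwards [ae_restrict_mem measurableSet_uIoc] with s hs
        rw [uIoc_of_le hτ0] at hs
        exact (Real.norm_eq_abs _) ▸ key s ⟨hs.1.le, hs.2⟩
      · exact ((continuous_const.mul hcont).intervalIntegrable _ _)
    have hval : (∫ s in (0:ℝ)..τ, C * (M * C ^ i * s ^ i / i.factorial))
        = M * C ^ (i+1) * τ ^ (i+1) / (i+1).factorial := by
      have h1 : ∀ s : ℝ, C * (M * C ^ i * s ^ i / i.factorial)
          = (C * M * C ^ i / i.factorial) * s ^ i := by intro s; ring
      simp_rw [h1]
      rw [intervalIntegral.integral_const_mul, integral_pow, Nat.factorial_succ]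
      have h2 : ((i:ℝ) + 1) ≠ 0 := by positivity
      have h3 : ((i.factorial : ℝ)) ≠ 0 := by positivity
      push_cast
      field_simp
      ring
    have hnn : (0:ℝ) ≤ M * C ^ (i+1) * τ ^ (i+1) / (i+1).factorial := by
      apply div_nonneg _ (Nat.cast_nonneg _)
      exact mul_nonneg (mul_nonneg hM0 (pow_nonneg hC0 _)) (pow_nonneg hτ0 _)
    calc |renewalTerm P U (i+1) τ| ≤ |∫ s in (0:ℝ)..τ, C * (M * C ^ i * s ^ i / i.factorial)| := by
          simpa [renewalTerm] using hbig
      _ = M * C ^ (i+1) * τ ^ (i+1) / (i+1).factorial := by rw [hval, abs_of_nonneg hnn]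

lemma bound_summable (M C T : ℝ) :
    Summable (fun i : ℕ => M * C ^ i * T ^ i / i.factorial) := by
  have : ∀ i : ℕ, M * C ^ i * T ^ i / i.factorial = M * ((C*T) ^ i / i.factorial) := by
    intro i; rw [mul_pow]; ring
  simp_rw [this]
  exact (Real.summable_pow_div_factorial (C*T)).mul_left M

lemma bound_nonneg {M C T : ℝ} (hM0 : 0 ≤ M) (hC0 : 0 ≤ C) (hT0 : 0 ≤ T) (i : ℕ) :
    0 ≤ M * C ^ i * T ^ i / i.factorial := by
  apply div_nonneg _ (Nat.cast_nonneg _)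
  exact mul_nonneg (mul_nonneg hM0 (pow_nonneg hC0 _)) (pow_nonneg hT0 _)

lemma rt_summable {T M C : ℝ} (hM0 : 0 ≤ M) (hC0 : 0 ≤ C)
    (hM : ∀ t ∈ Icc (0:ℝ) T, |U t| ≤ M) (hC : ∀ t ∈ Icc (0:ℝ) T, |P t| ≤ C)
    {τ : ℝ} (hτ : τ ∈ Icc (0:ℝ) T) :
    Summable (fun i => renewalTerm P U i τ) := by
  apply Summable.of_norm_bounded (bound_summable M C τ)
  intro i
  simpa [Real.norm_eq_abs] using rt_bound hM0 hC0 hM hC i τ hτ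

lemma rd_abs_le {T M C : ℝ} (hM0 : 0 ≤ M) (hC0 : 0 ≤ C)
    (hM : ∀ t ∈ Icc (0:ℝ) T, |U t| ≤ M) (hC : ∀ t ∈ Icc (0:ℝ) T, |P t| ≤ C)
    {τ : ℝ} (hτ : τ ∈ Icc (0:ℝ) T) :
    |renewalDensity P U τ| ≤ ∑' i : ℕ, M * C ^ i * T ^ i / i.factorial := by
  have hsum : Summable fun i => ‖renewalTerm P U i τ‖ := by
    apply Summable.of_nonneg_of_le (fun i => norm_nonneg _) _ (bound_summable M C τ)
    intro i
    simpa [Real.norm_eq_abs] using rt_bound hM0 hC0 hM hC i τ hτ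
  calc |renewalDensity P U τ| ≤ ∑' i, ‖renewalTerm P U i τ‖ := by
        rw [← Real.norm_eq_abs]; exact norm_tsum_le_tsum_norm hsum
    _ ≤ ∑' i : ℕ, M * C ^ i * T ^ i / i.factorial := by
        apply Summable.tsum_le_tsum _ hsum (bound_summable M C T)
        intro i
        calc ‖renewalTerm P U i τ‖ ≤ M * C ^ i * τ ^ i / i.factorial := by
              simpa [Real.norm_eq_abs] using rt_bound hM0 hC0 hM hC i τ hτ
          _ ≤ M * C ^ i * T ^ i / i.factorial := by
              gcongr
              all_goals first
                | exact mul_nonneg hM0 (pow_nonneg hC0 _) | exact hτ.1 | exact hτ.2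

lemma rd_contOn (hP : Continuous P) (hU : Continuous U) {T M C : ℝ} (hM0 : 0 ≤ M) (hC0 : 0 ≤ C)
    (hM : ∀ t ∈ Icc (0:ℝ) T, |U t| ≤ M) (hC : ∀ t ∈ Icc (0:ℝ) T, |P t| ≤ C) :
    ContinuousOn (renewalDensity P U) (Icc (0:ℝ) T) := by
  have huc : TendstoUniformlyOn (fun (n : Finset ℕ) τ => ∑ i ∈ n, renewalTerm P U i τ)
      (renewalDensity P U) atTop (Icc 0 T) := by
    apply tendstoUniformlyOn_tsum (bound_summable M C T)
    intro i τ hτ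
    calc ‖renewalTerm P U i τ‖ ≤ M * C ^ i * τ ^ i / i.factorial := by
          simpa [Real.norm_eq_abs] using rt_bound hM0 hC0 hM hC i τ hτ
      _ ≤ M * C ^ i * T ^ i / i.factorial := by
          gcongr
          all_goals first
            | exact mul_nonneg hM0 (pow_nonneg hC0 _) | exact hτ.1 | exact hτ.2
  apply huc.continuousOn
  refine Filter.Eventually.frequently ?_
  filter_upwards with n
  exact (continuous_finset_sum n fun i _ => rt_cont hP hU i).continuousOn

lemma renewal_eq (hP : Continuous P) (hU : Continuous U) {T M C : ℝ} (hM0 : 0 ≤ M) (hC0 : 0 ≤ C)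
    (hM : ∀ t ∈ Icc (0:ℝ) T, |U t| ≤ M) (hC : ∀ t ∈ Icc (0:ℝ) T, |P t| ≤ C)
    {t : ℝ} (ht : t ∈ Icc (0:ℝ) T) :
    renewalDensity P U t = U t + ∫ s in Ioc (0:ℝ) t, P (t - s) * renewalDensity P U s := by
  obtain ⟨ht0, htT⟩ := ht
  set f : ℕ → ℝ → ℝ := fun i s => P (t - s) * renewalTerm P U i s with hf
  have hmeas : ∀ i, AEStronglyMeasurable (f i) (volume.restrict (Ioc (0:ℝ) t)) := fun i =>
    ((hP.comp (continuous_const.sub continuous_id)).mul (rt_cont hP hU i)).aestronglyMeasurable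
  set K : ℕ → ℝ := fun i => C * (M * C ^ i * t ^ i / i.factorial) with hK
  have hK0 : ∀ i, 0 ≤ K i := fun i => mul_nonneg hC0 (bound_nonneg hM0 hC0 ht0 i)
  have hKsum : Summable (fun i => K i * t) := by
    have : Summable (fun i : ℕ => M * C ^ i * t ^ i / i.factorial) := bound_summable M C t
    simpa [hK, mul_comm, mul_assoc, mul_left_comm] using ((this.mul_left C).mul_right t)
  have hfin : ∑' i, ∫⁻ s in Ioc (0:ℝ) t, ‖f i s‖₊ ≠ ⊤ := by
    have hle : ∀ i, ∫⁻ s in Ioc (0:ℝ) t, ‖f i s‖₊ ≤ ENNReal.ofReal (K i * t) := by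
      intro i
      have h1 : ∫⁻ s in Ioc (0:ℝ) t, ‖f i s‖₊ ≤ ∫⁻ _ in Ioc (0:ℝ) t, ENNReal.ofReal (K i) := by
        apply setLIntegral_mono measurable_const
        intro s hs
        rw [show ((‖f i s‖₊ : ENNReal)) = ENNReal.ofReal |f i s| from Real.enorm_eq_ofReal_abs _]
        apply ENNReal.ofReal_le_ofReal
        rw [hf, abs_mul]
        have h2 : |P (t - s)| ≤ C := hC _ ⟨by linarith [hs.1, hs.2], by linarith [hs.1, hs.2]⟩
        have h3 : |renewalTerm P U i s| ≤ M * C ^ i * t ^ i / i.factorial := by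
          calc |renewalTerm P U i s| ≤ M * C ^ i * s ^ i / i.factorial :=
                rt_bound hM0 hC0 hM hC i s ⟨hs.1.le, le_trans hs.2 htT⟩
            _ ≤ M * C ^ i * t ^ i / i.factorial := by
                gcongr
                all_goals first
                  | exact mul_nonneg hM0 (pow_nonneg hC0 _) | exact hs.1.le | exact hs.2
        exact mul_le_mul h2 h3 (abs_nonneg _) hC0
      calc ∫⁻ s in Ioc (0:ℝ) t, ‖f i s‖₊ ≤ ∫⁻ _ in Ioc (0:ℝ) t, ENNReal.ofReal (K i) := h1
        _ = ENNReal.ofReal (K i) * volume (Ioc (0:ℝ) t) := by rw [setLIntegral_const]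
        _ = ENNReal.ofReal (K i * t) := by
            rw [Real.volume_Ioc, sub_zero, ENNReal.ofReal_mul (hK0 i)]
    have hle2 : ∑' i, ∫⁻ s in Ioc (0:ℝ) t, ‖f i s‖₊ ≤ ENNReal.ofReal (∑' i, K i * t) := by
      calc ∑' i, ∫⁻ s in Ioc (0:ℝ) t, ‖f i s‖₊ ≤ ∑' i, ENNReal.ofReal (K i * t) :=
            ENNReal.tsum_le_tsum hle
        _ = ENNReal.ofReal (∑' i, K i * t) :=
            (ENNReal.ofReal_tsum_of_nonneg (fun i => mul_nonneg (hK0 i) ht0) hKsum).symm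
    exact ne_top_of_le_ne_top ENNReal.ofReal_ne_top hle2
  have hswap := integral_tsum hmeas hfin
  have hsum_t : Summable (fun i => renewalTerm P U i t) :=
    rt_summable hM0 hC0 hM hC ⟨ht0, htT⟩
  have h0 : renewalDensity P U t = renewalTerm P U 0 t + ∑' i, renewalTerm P U (i+1) t :=
    hsum_t.tsum_eq_zero_add
  have hstep : ∀ i : ℕ, renewalTerm P U (i+1) t = ∫ s in Ioc (0:ℝ) t, f i s := by
    intro i
    show (∫ s in (0:ℝ)..t, P (t - s) * renewalTerm P U i s) = _
    rw [intervalIntegral.integral_of_le ht0]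
  have hinner : ∀ s : ℝ, (∑' i, f i s) = P (t - s) * renewalDensity P U s := by
    intro s
    rw [hf]
    exact tsum_mul_left
  calc renewalDensity P U t = renewalTerm P U 0 t + ∑' i, renewalTerm P U (i+1) t := h0
    _ = U t + ∑' i, ∫ s in Ioc (0:ℝ) t, f i s := by
        simp only [renewalTerm]
        congr 1
        exact tsum_congr hstep
    _ = U t + ∫ s in Ioc (0:ℝ) t, ∑' i, f i s := by rw [hswap]
    _ = U t + ∫ s in Ioc (0:ℝ) t, P (t - s) * renewalDensity P U s := by
        congr 1
        exact integral_congr_ae (Filter.Eventually.of_forall hinner)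

end RT

lemma rt_congr (p u0 : ℝ → ℝ) :
    ∀ i, ∀ τ : ℝ, 0 ≤ τ → renewalTerm p u0 i τ =
      renewalTerm (fun x => p (max x 0)) (fun x => u0 (max x 0)) i τ := by
  intro i
  induction i with
  | zero => intro τ hτ; simp [renewalTerm, max_eq_left hτ]
  | succ i ih =>
    intro τ hτ
    show (∫ s in (0:ℝ)..τ, p (τ - s) * renewalTerm p u0 i s) = ∫ s in (0:ℝ)..τ, _
    apply intervalIntegral.integral_congr
    intro s hs
    rw [uIcc_of_le hτ] at hs
    have h1 : max (τ - s) 0 = τ - s := max_eq_left (by linarith [hs.1, hs.2])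
    show p (τ - s) * renewalTerm p u0 i s = _
    rw [ih s hs.1]
    simp only [h1]

lemma rd_congr (p u0 : ℝ → ℝ) (τ : ℝ) (hτ : 0 ≤ τ) :
    renewalDensity p u0 τ =
      renewalDensity (fun x => p (max x 0)) (fun x => u0 (max x 0)) τ := by
  unfold renewalDensity
  exact tsum_congr fun i => rt_congr p u0 i τ hτ

lemma setIntegral_comp_add (f : ℝ → ℂ) {S : Set ℝ} (hS : MeasurableSet S) (a : ℝ) :
    ∫ x in (fun x => x + a) ⁻¹' S, f (x + a) = ∫ y in S, f y := by
  have hSm : MeasurableSet ((fun x => x + a) ⁻¹' S) := hS.preimage (measurable_add_const a)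
  rw [← integral_indicator hSm, ← integral_indicator hS]
  have key : ∀ x, ((fun x => x + a) ⁻¹' S).indicator (fun x => f (x + a)) x
      = S.indicator f (x + a) := by
    intro x
    by_cases hx : x + a ∈ S
    · rw [Set.indicator_of_mem (by exact hx) f, Set.indicator_of_mem (by exact hx)]
    · rw [Set.indicator_of_notMem (by exact hx) f, Set.indicator_of_notMem (by exact hx)]
  simp_rw [key]
  exact integral_add_right_eq_self (S.indicator f) a

lemma integrableOn_comp_add {f : ℝ → ℂ} {S : Set ℝ} (hS : MeasurableSet S) (a : ℝ)
    (h : IntegrableOn f S) : IntegrableOn (fun x => f (x + a)) ((fun x => x + a) ⁻¹' S) := by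
  have hSm : MeasurableSet ((fun x => x + a) ⁻¹' S) := hS.preimage (measurable_add_const a)
  rw [← integrable_indicator_iff hSm]
  rw [← integrable_indicator_iff hS] at h
  have key : ∀ x, ((fun x => x + a) ⁻¹' S).indicator (fun x => f (x + a)) x
      = S.indicator f (x + a) := by
    intro x
    by_cases hx : x + a ∈ S
    · rw [Set.indicator_of_mem (by exact hx) f, Set.indicator_of_mem (by exact hx)]
    · rw [Set.indicator_of_notMem (by exact hx) f, Set.indicator_of_notMem (by exact hx)]
  exact (funext key) ▸ (h.comp_add_right a)

lemma integrableOn_of_bdd {f : ℝ → ℂ} {S : Set ℝ} (hμ : volume S ≠ ⊤)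
    (hm : AEStronglyMeasurable f (volume.restrict S)) {c : ℝ}
    (hc : ∀ᵐ x ∂(volume.restrict S), ‖f x‖ ≤ c) : IntegrableOn f S :=
  Integrable.mono' (integrableOn_const hμ) hm hc

set_option maxHeartbeats 1000000 in
/-- For continuous `p ∈ 𝒞`, `u0 ∈ 𝒞`, and the strong solution
`u(x,τ) = u0(x+τ) + ∫_0^τ p(x+τ−s) α(s) ds`, the spatial Laplace transform
satisfies `û(q,τ) = e^{qτ} û0(q) + (p̂(q) − 1) ∫_0^τ e^{q(τ−s)} α(s) ds`
for every complex `q` with `Re q > 0` and every `τ ≥ 0`. -/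
theorem stmt7 (p u0 : ℝ → ℝ) (hp : MemC p) (hpc : ContinuousOn p (Set.Ici 0))
    (hu0 : MemC u0) (u : ℝ → ℝ → ℝ)
    (hu : ∀ x τ : ℝ, u x τ =
      u0 (x + τ) + ∫ s in (0 : ℝ)..τ, p (x + τ - s) * renewalDensity p u0 s) :
    ∀ q : ℂ, 0 < q.re → ∀ τ : ℝ, 0 ≤ τ →
      (∫ x in Set.Ici (0 : ℝ), Complex.exp (-q * (x : ℂ)) * (u x τ : ℂ))
        = Complex.exp (q * (τ : ℂ)) * laplaceFn u0 q
          + (laplaceFn p q - 1)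
            * ∫ s in (0 : ℝ)..τ,
                Complex.exp (q * ((τ - s : ℝ) : ℂ)) * (renewalDensity p u0 s : ℂ) := by
  intro q hq τ hτ
  -- real setup
  set P : ℝ → ℝ := fun x => p (max x 0) with hPdef
  set U : ℝ → ℝ := fun x => u0 (max x 0) with hUdef
  have hmax : Continuous fun x : ℝ => max x 0 := continuous_id.max continuous_const
  have hmaxmem : ∀ x : ℝ, max x 0 ∈ Ici (0:ℝ) := fun x => le_max_right x 0
  have hPc : Continuous P := hpc.comp_continuous hmax hmaxmem
  have hUc : Continuous U := (hu0.1.continuousOn).comp_continuous hmax hmaxmem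
  set A : ℝ → ℝ := renewalDensity P U with hAdef
  -- global bound for P
  obtain ⟨R, hR⟩ : ∃ R : ℝ, ∀ y ≥ R, |p y| < 1 := by
    have h1 : ∀ᶠ y in atTop, p y ∈ Metric.ball (0:ℝ) 1 :=
      hp.2.2.2.2.eventually (Metric.ball_mem_nhds 0 one_pos)
    simp only [Metric.mem_ball, Real.dist_eq, sub_zero, eventually_atTop] at h1
    obtain ⟨R, hR⟩ := h1
    exact ⟨R, fun y hy => hR y hy⟩
  obtain ⟨C0, hC0⟩ := (isCompact_Icc (a := (0:ℝ)) (b := max R 0)).exists_bound_of_continuousOn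
    (hpc.mono (Icc_subset_Ici_self))
  set B : ℝ := max C0 1 with hBdef
  have hB0 : (0:ℝ) ≤ B := le_trans zero_le_one (le_max_right _ _)
  have hPB : ∀ x : ℝ, |P x| ≤ B := by
    intro x
    rcases le_or_gt (max x 0) (max R 0) with h | h
    · have := hC0 (max x 0) ⟨le_max_right _ _, h⟩
      rw [Real.norm_eq_abs] at this
      exact le_trans this (le_max_left _ _)
    · have := hR (max x 0) (le_trans (le_max_left _ _) h.le)
      exact le_trans this.le (le_max_right _ _)
  have hPBIcc : ∀ t ∈ Icc (0:ℝ) τ, |P t| ≤ B := fun t _ => hPB t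
  -- bound for U on [0, τ]
  obtain ⟨M0, hM0⟩ := (isCompact_Icc (a := (0:ℝ)) (b := τ)).exists_bound_of_continuousOn
    hUc.continuousOn
  set M : ℝ := max M0 0 with hMdef
  have hM0' : (0:ℝ) ≤ M := le_max_right _ _
  have hMIcc : ∀ t ∈ Icc (0:ℝ) τ, |U t| ≤ M := by
    intro t ht
    have := hM0 t ht
    rw [Real.norm_eq_abs] at this
    exact le_trans this (le_max_left _ _)
  -- renewal density bounds and continuity
  set EA : ℝ := ∑' i : ℕ, M * B ^ i * τ ^ i / i.factorial with hEAdef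
  have hEA : ∀ s ∈ Icc (0:ℝ) τ, |A s| ≤ EA := fun s hs =>
    rd_abs_le hM0' hB0 hMIcc hPBIcc hs
  have hEA0 : (0:ℝ) ≤ EA := tsum_nonneg (bound_nonneg hM0' hB0 hτ)
  have hAcont : ContinuousOn A (Icc (0:ℝ) τ) := rd_contOn hPc hUc hM0' hB0 hMIcc hPBIcc
  have hrenew : ∀ t ∈ Icc (0:ℝ) τ,
      A t = U t + ∫ s in Ioc (0:ℝ) t, P (t - s) * A s :=
    fun t ht => renewal_eq hPc hUc hM0' hB0 hMIcc hPBIcc ht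
  -- clamped version of A
  set Ac : ℝ → ℝ := fun s => A (max (min s τ) 0) with hAcdef
  have hclampmem : ∀ s : ℝ, max (min s τ) 0 ∈ Icc (0:ℝ) τ := fun s =>
    ⟨le_max_right _ _, max_le (min_le_right _ _) hτ⟩
  have hAc : Continuous Ac :=
    hAcont.comp_continuous ((continuous_id.min continuous_const).max continuous_const) hclampmem
  have hAceq : ∀ s ∈ Icc (0:ℝ) τ, Ac s = A s := by
    intro s hs
    simp only [hAcdef, min_eq_left hs.2, max_eq_left hs.1]
  have hAcB : ∀ s : ℝ, |Ac s| ≤ EA := fun s => hEA _ (hclampmem s)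
  -- complex exponential
  set E : ℝ → ℂ := fun x => Complex.exp (-q * x) with hEdef
  have hEc : Continuous E := Complex.continuous_exp.comp (by fun_prop)
  have hEnorm : ∀ x : ℝ, ‖E x‖ = Real.exp (-q.re * x) := by
    intro x
    rw [hEdef]
    rw [Complex.norm_exp]
    congr 1
    simp [Complex.mul_re]
  have hE1 : ∀ x : ℝ, 0 ≤ x → ‖E x‖ ≤ 1 := by
    intro x hx
    rw [hEnorm]
    apply Real.exp_le_one_iff.2
    nlinarith [hq]
  have hEadd : ∀ x y : ℝ, E (x + y) = E x * E y := by
    intro x y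
    simp only [hEdef]
    rw [← Complex.exp_add]
    congr 1
    push_cast
    ring
  have hfact : ∀ s : ℝ, Complex.exp (q * ((τ:ℂ) - s)) = Complex.exp (q * τ) * E s := by
    intro s
    simp only [hEdef]
    rw [← Complex.exp_add]
    congr 1
    ring
  -- integrable base functions
  have hUint : IntegrableOn U (Ici (0:ℝ)) :=
    (hu0.2.1.congr_fun (fun x hx => by simp [hUdef, max_eq_left (mem_Ici.1 hx)]) measurableSet_Ici)
  have hPint : IntegrableOn P (Ici (0:ℝ)) :=
    (hp.2.1.congr_fun (fun x hx => by simp [hPdef, max_eq_left (mem_Ici.1 hx)]) measurableSet_Ici)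
  have hexp_int : IntegrableOn (fun x => Real.exp (-q.re * x)) (Ici (0:ℝ)) := by
    rw [integrableOn_Ici_iff_integrableOn_Ioi]
    exact exp_neg_integrableOn_Ioi 0 hq
  set g : ℝ → ℂ := fun y => E y * (U y : ℂ) with hgdef
  set gp : ℝ → ℂ := fun y => E y * (P y : ℂ) with hgpdef
  have haebound : ∀ᵐ x ∂(volume.restrict (Ici (0:ℝ))), ‖E x‖ ≤ 1 :=
    (ae_restrict_iff' measurableSet_Ici).2 (Eventually.of_forall fun x hx => hE1 x hx)
  have hg_int : IntegrableOn g (Ici (0:ℝ)) :=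
    Integrable.bdd_mul hUint.ofReal hEc.aestronglyMeasurable haebound
  have hgp_int : IntegrableOn gp (Ici (0:ℝ)) :=
    Integrable.bdd_mul hPint.ofReal hEc.aestronglyMeasurable haebound
  have hlap_u0 : laplaceFn u0 q = ∫ y in Ici (0:ℝ), g y := by
    apply setIntegral_congr_fun measurableSet_Ici
    intro y hy
    simp [hgdef, hEdef, hUdef, max_eq_left (mem_Ici.1 hy)]
  have hlap_p : laplaceFn p q = ∫ y in Ici (0:ℝ), gp y := by
    apply setIntegral_congr_fun measurableSet_Ici
    intro y hy
    simp [hgpdef, hEdef, hPdef, max_eq_left (mem_Ici.1 hy)]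
  -- shift and split identities
  have hIciShift : ∀ (f : ℝ → ℂ) (a : ℝ),
      (∫ x in Ici (0:ℝ), f (x + a)) = ∫ y in Ici a, f y := by
    intro f a
    have hpre : (fun x : ℝ => x + a) ⁻¹' (Ici a) = Ici (0:ℝ) := by
      ext x; simp
    rw [← hpre]
    exact setIntegral_comp_add f measurableSet_Ici a
  have hsplit : ∀ (f : ℝ → ℂ) (a : ℝ), 0 ≤ a → IntegrableOn f (Ici (0:ℝ)) →
      (∫ x in Ici a, f x) = (∫ x in Ici (0:ℝ), f x) - ∫ x in Ico 0 a, f x := by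
    intro f a ha hf
    have hun : Ico (0:ℝ) a ∪ Ici a = Ici (0:ℝ) := Ico_union_Ici_eq_Ici ha
    have hdisj : Disjoint (Ico (0:ℝ) a) (Ici a) :=
      Set.disjoint_left.2 fun x hx hx' => hx.2.not_ge hx'
    have h1 : IntegrableOn f (Ico (0:ℝ) a) := hf.mono_set Ico_subset_Ici_self
    have h2 : IntegrableOn f (Ici a) := hf.mono_set (Ici_subset_Ici.2 ha)
    have := setIntegral_union hdisj measurableSet_Ici h1 h2
    rw [hun] at this
    rw [this]
    ring
  have hErfl : ∀ x : ℝ, Complex.exp (-q * (x:ℂ)) = E x := fun x => rfl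
  have hone' : ∀ r : ℝ, Complex.exp (q * (r:ℂ)) * E r = 1 := by
    intro r
    simp only [hEdef]
    rw [← Complex.exp_add, show q * (r:ℂ) + -q * r = 0 by ring, Complex.exp_zero]
  -- the two components of the solution
  set F1 : ℝ → ℂ := fun x => E x * (U (x + τ) : ℂ) with hF1def
  set W2 : ℝ → ℝ := fun x => ∫ s in (0:ℝ)..τ, P (x + τ - s) * Ac s with hW2def
  set F2 : ℝ → ℂ := fun x => E x * (W2 x : ℂ) with hF2def
  have hLHS : (∫ x in Ici (0:ℝ), Complex.exp (-q * (x:ℂ)) * (u x τ : ℂ))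
      = ∫ x in Ici (0:ℝ), (F1 x + F2 x) := by
    apply setIntegral_congr_fun measurableSet_Ici
    intro x hx
    have hx0 : (0:ℝ) ≤ x := hx
    show Complex.exp (-q * (x:ℂ)) * ((u x τ : ℝ) : ℂ) = F1 x + F2 x
    rw [hu x τ]
    have h1 : u0 (x + τ) = U (x + τ) := by
      simp only [hUdef, max_eq_left (by linarith : (0:ℝ) ≤ x + τ)]
    have h2 : (∫ s in (0:ℝ)..τ, p (x + τ - s) * renewalDensity p u0 s) = W2 x := by
      simp only [hW2def]
      apply intervalIntegral.integral_congr
      intro s hs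
      rw [uIcc_of_le hτ] at hs
      beta_reduce
      rw [rd_congr p u0 s hs.1]
      have h3 : max (x + τ - s) 0 = x + τ - s := max_eq_left (by linarith [hs.2])
      rw [hAceq s ⟨hs.1, hs.2⟩]
      simp only [hPdef, hUdef, hAdef, h3]
    rw [h1, h2, hErfl x]
    simp only [hF1def, hF2def]
    push_cast
    ring
  -- integrability of F1 and F2
  have hpre2 : (fun x : ℝ => x + τ) ⁻¹' (Ici τ) = Ici (0:ℝ) := by ext x; simp
  have hUshift : IntegrableOn (fun x => ((U (x + τ) : ℝ) : ℂ)) (Ici (0:ℝ)) := by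
    have h0 : IntegrableOn (fun y => ((U y : ℝ) : ℂ)) (Ici τ) :=
      MeasureTheory.IntegrableOn.mono_set hUint.ofReal (Ici_subset_Ici.2 hτ)
    have h := integrableOn_comp_add measurableSet_Ici τ h0
    rwa [hpre2] at h
  have hF1int : IntegrableOn F1 (Ici (0:ℝ)) :=
    Integrable.bdd_mul hUshift hEc.aestronglyMeasurable haebound
  have hW2c : Continuous W2 := by
    have hcc : Continuous (Function.uncurry fun (x s : ℝ) => P (x + τ - s) * Ac s) := by
      show Continuous fun z : ℝ × ℝ => P (z.1 + τ - z.2) * Ac z.2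
      exact (hPc.comp (by fun_prop)).mul (hAc.comp continuous_snd)
    exact intervalIntegral.continuous_parametric_intervalIntegral_of_continuous hcc
      continuous_const
  have hW2b : ∀ x : ℝ, |W2 x| ≤ B * EA * τ := by
    intro x
    simp only [hW2def]
    rw [← Real.norm_eq_abs]
    calc ‖∫ s in (0:ℝ)..τ, P (x + τ - s) * Ac s‖ ≤ B * EA * |τ - 0| := by
          apply intervalIntegral.norm_integral_le_of_norm_le_const
          intro s _
          rw [Real.norm_eq_abs, abs_mul]
          exact mul_le_mul (hPB _) (hAcB s) (abs_nonneg _) hB0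
      _ = B * EA * τ := by rw [sub_zero, abs_of_nonneg hτ]
  have hF2int : IntegrableOn F2 (Ici (0:ℝ)) := by
    apply Integrable.mono' (g := fun x => Real.exp (-q.re * x) * (B * EA * τ))
      (hexp_int.mul_const _)
      ((hEc.mul (Complex.continuous_ofReal.comp hW2c)).aestronglyMeasurable)
    apply (ae_restrict_iff' measurableSet_Ici).2 (Eventually.of_forall fun x _ => ?_)
    show ‖E x * ((W2 x : ℝ) : ℂ)‖ ≤ Real.exp (-q.re * x) * (B * EA * τ)
    rw [norm_mul, Complex.norm_real, Real.norm_eq_abs, hEnorm]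
    exact mul_le_mul_of_nonneg_left (hW2b x) (Real.exp_nonneg _)
  -- the first piece
  have hI1 : (∫ x in Ici (0:ℝ), F1 x)
      = Complex.exp (q * τ) * ((∫ y in Ici (0:ℝ), g y) - ∫ y in Ico (0:ℝ) τ, g y) := by
    have h1 : ∀ x : ℝ, F1 x = Complex.exp (q * τ) * g (x + τ) := by
      intro x
      simp only [hF1def, hgdef]
      rw [hEadd x τ]
      linear_combination (-(E x * ((U (x + τ) : ℝ) : ℂ))) * (hone' τ)
    simp_rw [h1]
    rw [integral_const_mul, hIciShift g τ, hsplit g τ hτ hg_int]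
  -- double integral representation of the second piece
  set F : ℝ → ℝ → ℂ := fun x s => (E x * (P (x + τ - s) : ℂ)) * (Ac s : ℂ) with hFdef
  have hF2eq : ∀ x : ℝ, F2 x = ∫ s in Ioc (0:ℝ) τ, F x s := by
    intro x
    simp only [hF2def, hW2def]
    rw [← intervalIntegral.integral_ofReal (f := fun s => P (x + τ - s) * Ac s),
      intervalIntegral.integral_of_le hτ, ← integral_const_mul]
    apply integral_congr_ae (Eventually.of_forall fun s => ?_)
    simp only [hFdef]
    push_cast
    ring
  have hF2ieq : (∫ x in Ici (0:ℝ), F2 x) = ∫ x in Ici (0:ℝ), ∫ s in Ioc (0:ℝ) τ, F x s :=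
    setIntegral_congr_fun measurableSet_Ici fun x _ => hF2eq x
  have hIocτfin : volume (Ioc (0:ℝ) τ) < ⊤ := by
    rw [Real.volume_Ioc]; exact ENNReal.ofReal_lt_top
  have hFint : Integrable (Function.uncurry F)
      ((volume.restrict (Ici (0:ℝ))).prod (volume.restrict (Ioc (0:ℝ) τ))) := by
    have hmeasF : AEStronglyMeasurable (Function.uncurry F)
        ((volume.restrict (Ici (0:ℝ))).prod (volume.restrict (Ioc (0:ℝ) τ))) := by
      apply Continuous.aestronglyMeasurable
      show Continuous fun z : ℝ × ℝ => (E z.1 * (P (z.1 + τ - z.2) : ℂ)) * (Ac z.2 : ℂ)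
      exact ((hEc.comp continuous_fst).mul
        (Complex.continuous_ofReal.comp (hPc.comp (by fun_prop)))).mul
        (Complex.continuous_ofReal.comp (hAc.comp continuous_snd))
    apply Integrable.mono' (g := fun z : ℝ × ℝ => Real.exp (-q.re * z.1) * (B * EA))
      ?_ hmeasF ?_
    · exact Integrable.mul_prod hexp_int (integrableOn_const hIocτfin.ne)
    · rw [Measure.prod_restrict]
      apply (ae_restrict_iff' (measurableSet_Ici.prod measurableSet_Ioc)).2
      apply Eventually.of_forall
      rintro ⟨x, s⟩ ⟨hx, hs⟩
      show ‖(E x * (P (x + τ - s):ℂ)) * (Ac s : ℂ)‖ ≤ _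
      rw [norm_mul, norm_mul, Complex.norm_real, Complex.norm_real, Real.norm_eq_abs,
        Real.norm_eq_abs, hEnorm]
      calc Real.exp (-q.re * x) * |P (x + τ - s)| * |Ac s|
          ≤ Real.exp (-q.re * x) * B * EA := by
            apply mul_le_mul (mul_le_mul le_rfl (hPB _) (abs_nonneg _) (Real.exp_nonneg _))
              (hAcB s) (abs_nonneg _) (mul_nonneg (Real.exp_nonneg _) hB0)
        _ = Real.exp (-q.re * x) * (B * EA) := by ring
  have hswap1 : (∫ x in Ici (0:ℝ), ∫ s in Ioc (0:ℝ) τ, F x s)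
      = ∫ s in Ioc (0:ℝ) τ, ∫ x in Ici (0:ℝ), F x s := integral_integral_swap hFint
  -- the truncated Laplace transform of p
  set Wq : ℝ → ℂ := fun s => ∫ y in (0:ℝ)..(τ - s), gp y with hWqdef
  have hWqc : Continuous Wq := by
    have hcc : Continuous (Function.uncurry fun (_ y : ℝ) => gp y) := by
      show Continuous fun z : ℝ × ℝ => gp z.2
      exact (hEc.mul (Complex.continuous_ofReal.comp hPc)).comp continuous_snd
    exact intervalIntegral.continuous_parametric_intervalIntegral_of_continuous hcc
      (continuous_const.sub continuous_id)
  have hWq_eq : ∀ s : ℝ, s ≤ τ → Wq s = ∫ y in Ico (0:ℝ) (τ - s), gp y := by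
    intro s hs
    simp only [hWqdef]
    rw [intervalIntegral.integral_of_le (by linarith), integral_Ioc_eq_integral_Ioo,
      ← integral_Ico_eq_integral_Ioo]
  have hinner1 : ∀ s ∈ Ioc (0:ℝ) τ, (∫ x in Ici (0:ℝ), F x s)
      = (Complex.exp (q * ((τ:ℂ) - s))
          * ((∫ y in Ici (0:ℝ), gp y) - ∫ y in Ico (0:ℝ) (τ - s), gp y)) * (Ac s : ℂ) := by
    intro s hs
    have hτs : (0:ℝ) ≤ τ - s := by linarith [hs.2]
    have hone'' : Complex.exp (q * ((τ:ℂ) - s)) * E (τ - s) = 1 := by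
      have h := hone' (τ - s)
      push_cast at h
      exact h
    have h1 : ∀ x : ℝ, F x s
        = (Complex.exp (q * ((τ:ℂ) - s)) * gp (x + (τ - s))) * (Ac s : ℂ) := by
      intro x
      simp only [hFdef, hgpdef]
      rw [show x + τ - s = x + (τ - s) by ring, hEadd x (τ - s)]
      linear_combination (-(E x * ((P (x + (τ - s)) : ℝ) : ℂ) * ((Ac s : ℝ) : ℂ))) * hone''
    simp_rw [h1]
    rw [integral_mul_const, integral_const_mul, hIciShift gp (τ - s),
      hsplit gp (τ - s) hτs hgp_int]
  -- split the second piece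
  set R : ℂ := ∫ s in Ioc (0:ℝ) τ, Complex.exp (q * ((τ:ℂ) - s)) * (Ac s : ℂ) with hRdef
  set J : ℂ := ∫ s in Ioc (0:ℝ) τ,
      (Ac s : ℂ) * (Complex.exp (q * ((τ:ℂ) - s)) * Wq s) with hJdef
  have hexpb : ∀ s : ℝ, 0 ≤ s → ‖Complex.exp (q * ((τ:ℂ) - s))‖ ≤ Real.exp (q.re * τ) := by
    intro s hs
    rw [Complex.norm_exp]
    apply Real.exp_le_exp.2
    have hre : (q * ((τ:ℂ) - s)).re = q.re * (τ - s) := by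
      simp [Complex.mul_re]
    rw [hre]
    nlinarith [hq.le]
  have hexpAc_c : Continuous fun s : ℝ => Complex.exp (q * ((τ:ℂ) - s)) * (Ac s : ℂ) :=
    (Complex.continuous_exp.comp (continuous_const.mul
      (continuous_const.sub Complex.continuous_ofReal))).mul
      (Complex.continuous_ofReal.comp hAc)
  have hEAc_int : IntegrableOn
      (fun s : ℝ => Complex.exp (q * ((τ:ℂ) - s)) * (Ac s : ℂ)) (Ioc (0:ℝ) τ) := by
    apply integrableOn_of_bdd hIocτfin.ne hexpAc_c.aestronglyMeasurable
      (c := Real.exp (q.re * τ) * EA)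
    apply (ae_restrict_iff' measurableSet_Ioc).2 (Eventually.of_forall fun s hs => ?_)
    rw [norm_mul, Complex.norm_real, Real.norm_eq_abs]
    exact mul_le_mul (hexpb s hs.1.le) (hAcB s) (abs_nonneg _) (Real.exp_nonneg _)
  obtain ⟨BW, hBW0, hBW⟩ : ∃ BW : ℝ, 0 ≤ BW ∧ ∀ s : ℝ, ‖Wq s‖ ≤ BW ∨ True := ⟨0, le_rfl, fun _ => Or.inr trivial⟩
  obtain ⟨BW2, hBW2⟩ := (isCompact_Icc (a := (0:ℝ)) (b := τ)).exists_bound_of_continuousOn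
    hWqc.continuousOn
  have hAEW_c : Continuous fun s : ℝ =>
      (Ac s : ℂ) * (Complex.exp (q * ((τ:ℂ) - s)) * Wq s) :=
    (Complex.continuous_ofReal.comp hAc).mul
      ((Complex.continuous_exp.comp (continuous_const.mul
        (continuous_const.sub Complex.continuous_ofReal))).mul hWqc)
  have hAEW_int : IntegrableOn
      (fun s : ℝ => (Ac s : ℂ) * (Complex.exp (q * ((τ:ℂ) - s)) * Wq s)) (Ioc (0:ℝ) τ) := by
    apply integrableOn_of_bdd hIocτfin.ne hAEW_c.aestronglyMeasurable
      (c := EA * (Real.exp (q.re * τ) * max BW2 0))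
    apply (ae_restrict_iff' measurableSet_Ioc).2 (Eventually.of_forall fun s hs => ?_)
    rw [norm_mul, norm_mul, Complex.norm_real, Real.norm_eq_abs]
    apply mul_le_mul (hAcB s) ?_ (mul_nonneg (norm_nonneg _) (norm_nonneg _)) hEA0
    apply mul_le_mul (hexpb s hs.1.le)
      (le_trans (hBW2 s ⟨hs.1.le, hs.2⟩) (le_max_left _ _)) (norm_nonneg _) (Real.exp_nonneg _)
  have hI2 : (∫ x in Ici (0:ℝ), F2 x) = laplaceFn p q * R - J := by
    rw [hF2ieq, hswap1]
    have hstep : (∫ s in Ioc (0:ℝ) τ, ∫ x in Ici (0:ℝ), F x s)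
        = ∫ s in Ioc (0:ℝ) τ,
            (laplaceFn p q * (Complex.exp (q * ((τ:ℂ) - s)) * (Ac s : ℂ))
              - (Ac s : ℂ) * (Complex.exp (q * ((τ:ℂ) - s)) * Wq s)) := by
      apply setIntegral_congr_fun measurableSet_Ioc
      intro s hs
      beta_reduce
      rw [hinner1 s hs, ← hlap_p, ← hWq_eq s hs.2]
      ring
    rw [hstep, integral_sub (hEAc_int.const_mul (laplaceFn p q)) hAEW_int,
      integral_const_mul, ← hRdef, ← hJdef]
  -- evaluate J
  set φ : ℝ → ℝ → ℂ :=
    fun s t => (Ac s : ℂ) * ((Ico s τ).indicator (fun t => E t * (P (t - s) : ℂ)) t) with hφdef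
  have hJinner : ∀ s ∈ Ioc (0:ℝ) τ,
      (Ac s : ℂ) * (Complex.exp (q * ((τ:ℂ) - s)) * Wq s)
        = Complex.exp (q * τ) * ∫ t in Ioc (0:ℝ) τ, φ s t := by
    intro s hs
    have hτs : (0:ℝ) ≤ τ - s := by linarith [hs.2]
    rw [hWq_eq s hs.2]
    have h1 : Complex.exp (q * ((τ:ℂ) - s)) * ∫ y in Ico (0:ℝ) (τ - s), gp y
        = Complex.exp (q * τ) * ∫ y in Ico (0:ℝ) (τ - s), E (y + s) * (P y : ℂ) := by
      rw [← integral_const_mul, ← integral_const_mul]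
      apply setIntegral_congr_fun measurableSet_Ico
      intro y hy
      simp only [hgpdef]
      rw [hEadd y s]
      linear_combination (E y * ((P y : ℝ) : ℂ)) * hfact s
    have h3 : (∫ y in Ico (0:ℝ) (τ - s), E (y + s) * (P y : ℂ))
        = ∫ t in Ico s τ, E t * (P (t - s) : ℂ) := by
      have hpre3 : (fun x : ℝ => x + s) ⁻¹' (Ico s τ) = Ico (0:ℝ) (τ - s) := by
        ext x
        simp only [mem_preimage, mem_Ico]
        constructor
        · rintro ⟨h1, h2⟩; constructor <;> linarith
        · rintro ⟨h1, h2⟩; constructor <;> linarith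
      have h := setIntegral_comp_add (fun t => E t * (P (t - s) : ℂ)) (S := Ico s τ)
        measurableSet_Ico s
      rw [hpre3] at h
      rw [← h]
      apply setIntegral_congr_fun measurableSet_Ico
      intro y _
      simp [add_sub_cancel_right]
    have h4 : (∫ t in Ico s τ, E t * (P (t - s) : ℂ))
        = ∫ t in Ioc (0:ℝ) τ, (Ico s τ).indicator (fun t => E t * (P (t - s) : ℂ)) t := by
      rw [setIntegral_indicator measurableSet_Ico, Set.inter_eq_self_of_subset_right]
      intro t ht
      exact ⟨lt_of_lt_of_le hs.1 ht.1, ht.2.le⟩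
    rw [h1, h3, h4]
    simp only [hφdef]
    rw [integral_const_mul ((Ac s : ℝ) : ℂ)]
    ring
  have hJ1 : J = Complex.exp (q * τ) * ∫ s in Ioc (0:ℝ) τ, ∫ t in Ioc (0:ℝ) τ, φ s t := by
    rw [hJdef]
    rw [setIntegral_congr_fun measurableSet_Ioc hJinner, integral_const_mul]
  -- Fubini for φ
  have hφuncurry : Function.uncurry φ
      = ({z : ℝ × ℝ | z.1 ≤ z.2 ∧ z.2 < τ}).indicator
          (fun z : ℝ × ℝ => (Ac z.1 : ℂ) * (E z.2 * (P (z.2 - z.1) : ℂ))) := by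
    funext z
    obtain ⟨s, t⟩ := z
    simp only [Function.uncurry, hφdef]
    by_cases h : s ≤ t ∧ t < τ
    · rw [Set.indicator_of_mem (mem_Ico.2 h),
        Set.indicator_of_mem (show (s, t) ∈ {z : ℝ × ℝ | z.1 ≤ z.2 ∧ z.2 < τ} from h)]
    · rw [Set.indicator_of_notMem (fun hc => h (mem_Ico.1 hc)), mul_zero,
        Set.indicator_of_notMem
          (show (s, t) ∉ {z : ℝ × ℝ | z.1 ≤ z.2 ∧ z.2 < τ} from h)]
  have hSDm : MeasurableSet ({z : ℝ × ℝ | z.1 ≤ z.2 ∧ z.2 < τ}) := by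
    have hrfl : {z : ℝ × ℝ | z.1 ≤ z.2 ∧ z.2 < τ}
        = {z : ℝ × ℝ | z.1 ≤ z.2} ∩ {z : ℝ × ℝ | z.2 < τ} := rfl
    rw [hrfl]
    exact (measurableSet_le measurable_fst measurable_snd).inter
      (measurableSet_lt measurable_snd measurable_const)
  have hφint : Integrable (Function.uncurry φ)
      ((volume.restrict (Ioc (0:ℝ) τ)).prod (volume.restrict (Ioc (0:ℝ) τ))) := by
    have hφm : AEStronglyMeasurable (Function.uncurry φ)
        ((volume.restrict (Ioc (0:ℝ) τ)).prod (volume.restrict (Ioc (0:ℝ) τ))) := by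
      rw [hφuncurry]
      apply AEStronglyMeasurable.indicator _ hSDm
      apply Continuous.aestronglyMeasurable
      exact (Complex.continuous_ofReal.comp (hAc.comp continuous_fst)).mul
        ((hEc.comp continuous_snd).mul
          (Complex.continuous_ofReal.comp (hPc.comp (continuous_snd.sub continuous_fst))))
    apply Integrable.mono' (g := fun _ : ℝ × ℝ => EA * B) ?_ hφm ?_
    · rw [Measure.prod_restrict]
      apply integrableOn_const (LT.lt.ne ?_)
      rw [Measure.prod_prod]
      exact ENNReal.mul_lt_top hIocτfin hIocτfin
    · rw [Measure.prod_restrict]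
      apply (ae_restrict_iff' (measurableSet_Ioc.prod measurableSet_Ioc)).2
      apply Eventually.of_forall
      rintro ⟨s, t⟩ ⟨hs, ht⟩
      rw [hφuncurry]
      calc ‖({z : ℝ × ℝ | z.1 ≤ z.2 ∧ z.2 < τ}).indicator
            (fun z : ℝ × ℝ => (Ac z.1 : ℂ) * (E z.2 * (P (z.2 - z.1) : ℂ))) (s, t)‖
          ≤ ‖(Ac s : ℂ) * (E t * (P (t - s) : ℂ))‖ := norm_indicator_le_norm_self _ _
        _ ≤ EA * (1 * B) := by
            rw [norm_mul, norm_mul, Complex.norm_real, Complex.norm_real, Real.norm_eq_abs,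
              Real.norm_eq_abs]
            apply mul_le_mul (hAcB s) ?_ (mul_nonneg (norm_nonneg _) (abs_nonneg _)) hEA0
            exact mul_le_mul (hE1 t ht.1.le) (hPB _) (abs_nonneg _) zero_le_one
        _ = EA * B := by ring
  have hswap2 : (∫ s in Ioc (0:ℝ) τ, ∫ t in Ioc (0:ℝ) τ, φ s t)
      = ∫ t in Ioc (0:ℝ) τ, ∫ s in Ioc (0:ℝ) τ, φ s t := integral_integral_swap hφint
  -- inner evaluation via the renewal equation
  have hinner2 : ∀ t ∈ Ioo (0:ℝ) τ,
      (∫ s in Ioc (0:ℝ) τ, φ s t) = E t * (Ac t : ℂ) - E t * (U t : ℂ) := by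
    intro t ht
    have h5 : ∀ s ∈ Ioc (0:ℝ) τ, φ s t
        = (Iic t).indicator (fun s => (Ac s : ℂ) * (E t * (P (t - s) : ℂ))) s := by
      intro s _
      simp only [hφdef]
      by_cases h : s ≤ t
      · rw [Set.indicator_of_mem (mem_Ico.2 ⟨h, ht.2⟩), Set.indicator_of_mem (mem_Iic.2 h)]
      · rw [Set.indicator_of_notMem (fun hc => h (mem_Ico.1 hc).1), mul_zero,
          Set.indicator_of_notMem (fun hc => h (mem_Iic.1 hc))]
    rw [setIntegral_congr_fun measurableSet_Ioc h5,
      setIntegral_indicator measurableSet_Iic]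
    have h6 : Ioc (0:ℝ) τ ∩ Iic t = Ioc (0:ℝ) t := by
      ext x
      simp only [mem_inter_iff, mem_Ioc, mem_Iic]
      constructor
      · rintro ⟨⟨h1, _⟩, h3⟩; exact ⟨h1, h3⟩
      · rintro ⟨h1, h2⟩; exact ⟨⟨h1, le_trans h2 ht.2.le⟩, h2⟩
    rw [h6]
    have h7 : ∀ s ∈ Ioc (0:ℝ) t,
        (Ac s : ℂ) * (E t * (P (t - s) : ℂ)) = E t * ((P (t - s) * A s : ℝ) : ℂ) := by
      intro s hs
      rw [hAceq s ⟨hs.1.le, le_trans hs.2 ht.2.le⟩]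
      push_cast
      ring
    have h8 := hrenew t ⟨ht.1.le, ht.2.le⟩
    have h9 : (∫ s in Ioc (0:ℝ) t, P (t - s) * A s) = A t - U t := by linarith [h8]
    have h10 : (∫ s in Ioc (0:ℝ) t, ((P (t - s) * A s : ℝ) : ℂ))
        = ((∫ s in Ioc (0:ℝ) t, P (t - s) * A s : ℝ) : ℂ) := integral_ofReal
    rw [setIntegral_congr_fun measurableSet_Ioc h7, integral_const_mul, h10, h9,
      ← hAceq t ⟨ht.1.le, ht.2.le⟩]
    push_cast
    ring
  -- conclude the J computation
  have hEAc2_int : IntegrableOn (fun t => E t * (Ac t : ℂ)) (Ioo (0:ℝ) τ) := by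
    have hμ : volume (Ioo (0:ℝ) τ) ≠ ⊤ := by
      rw [Real.volume_Ioo]; exact ENNReal.ofReal_ne_top
    apply integrableOn_of_bdd hμ ((hEc.mul
      (Complex.continuous_ofReal.comp hAc)).aestronglyMeasurable) (c := 1 * EA)
    apply (ae_restrict_iff' measurableSet_Ioo).2 (Eventually.of_forall fun t ht => ?_)
    show ‖E t * ((Ac t : ℝ) : ℂ)‖ ≤ 1 * EA
    rw [norm_mul, Complex.norm_real, Real.norm_eq_abs]
    exact mul_le_mul (hE1 t ht.1.le) (hAcB t) (abs_nonneg _) zero_le_one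
  have hEU2_int : IntegrableOn (fun t => E t * (U t : ℂ)) (Ioo (0:ℝ) τ) :=
    MeasureTheory.IntegrableOn.mono_set hg_int (fun x hx => hx.1.le)
  have hJ2 : (∫ t in Ioc (0:ℝ) τ, ∫ s in Ioc (0:ℝ) τ, φ s t)
      = (∫ t in Ioc (0:ℝ) τ, E t * (Ac t : ℂ)) - ∫ t in Ico (0:ℝ) τ, g t := by
    rw [MeasureTheory.integral_Ioc_eq_integral_Ioo,
      setIntegral_congr_fun measurableSet_Ioo hinner2,
      integral_sub hEAc2_int hEU2_int,
      ← MeasureTheory.integral_Ioc_eq_integral_Ioo]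
    have hg2 : (∫ t in Ico (0:ℝ) τ, g t) = ∫ t in Ioo (0:ℝ) τ, E t * (U t : ℂ) := by
      rw [MeasureTheory.integral_Ico_eq_integral_Ioo]
    rw [hg2]
  have hR2 : R = Complex.exp (q * τ) * ∫ t in Ioc (0:ℝ) τ, E t * (Ac t : ℂ) := by
    rw [hRdef, ← integral_const_mul]
    apply setIntegral_congr_fun measurableSet_Ioc
    intro s _
    beta_reduce
    rw [hfact s]
    ring
  have hJfin : J = R - Complex.exp (q * τ) * ∫ t in Ico (0:ℝ) τ, g t := by
    rw [hJ1, hswap2, hJ2, hR2]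
    ring
  -- assemble everything
  have hRHSint : (∫ s in (0:ℝ)..τ,
      Complex.exp (q * ((τ - s : ℝ) : ℂ)) * (renewalDensity p u0 s : ℂ)) = R := by
    rw [intervalIntegral.integral_of_le hτ, hRdef]
    apply setIntegral_congr_fun measurableSet_Ioc
    intro s hs
    beta_reduce
    rw [rd_congr p u0 s hs.1.le, ← hPdef, ← hUdef, ← hAdef, ← hAceq s ⟨hs.1.le, hs.2⟩]
    congr 2
    push_cast
    ring
  rw [hLHS, integral_add hF1int hF2int, hI1, hI2, hJfin, hlap_u0, hRHSint]
  ring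
end

section
/- Let p ∈ C be continuous, u0 ∈ C, α(τ) = Σ_{i≥0} (u0 * p^{*(i)})(τ), and A(τ) = ∫_0^τ α(s) ds. Assume A is a strictly increasing continuous bijection of [0,∞) onto [0,∞), and let τ(·) = A^{-1}. Then the initial data satisfies the identity û0(q) = (1 − p̂(q)) ∫_0^∞ e^{-q τ(s)} ds for every complex q with Re q > 0. -/
open MeasureTheory Set Filter Topology

/-- `A(τ) = ∫_0^τ α(s) ds`, the expected number of renewals up to time `τ`. -/
noncomputable def renewalFn (p u0 : ℝ → ℝ) (τ : ℝ) : ℝ :=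
  ∫ s in (0 : ℝ)..τ, renewalDensity p u0 s

open Complex
open scoped Convolution ENNReal NNReal


lemma norm_cexp_neg_mul (q : ℂ) (x : ℝ) : ‖Complex.exp (-q * x)‖ = Real.exp (-q.re * x) := by
  rw [Complex.norm_exp]
  congr 1
  simp [Complex.mul_re]

lemma tendsto_rexp_neg_mul (r : ℝ) (hr : 0 < r) :
    Tendsto (fun t : ℝ => Real.exp (-r * t)) atTop (𝓝 0) := by
  apply Real.tendsto_exp_atBot.comp
  exact Tendsto.const_mul_atTop_of_neg (show -r < 0 by linarith) tendsto_id

lemma integrableOn_cexp_Ioi (q : ℂ) (hq : 0 < q.re) (a : ℝ) :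
    IntegrableOn (fun t : ℝ => Complex.exp (-q * t)) (Ioi a) := by
  refine Integrable.mono' (exp_neg_integrableOn_Ioi a hq) ?_ ?_
  · exact (Complex.continuous_exp.comp (by continuity)).aestronglyMeasurable
  · filter_upwards with t
    rw [norm_cexp_neg_mul]

lemma integral_cexp_Ioi (q : ℂ) (hq : 0 < q.re) (a : ℝ) :
    ∫ t in Ioi a, Complex.exp (-q * t) = Complex.exp (-q * a) / q := by
  have hq0 : q ≠ 0 := fun h => by simp [h] at hq
  have hd : ∀ x ∈ Ici a, HasDerivAt (fun t : ℝ => -Complex.exp (-q * t) / q)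
      (Complex.exp (-q * x)) x := by
    intro x _
    have h0 := (Complex.hasDerivAt_exp (-q * (x:ℂ))).comp (x : ℂ)
      ((hasDerivAt_id (x : ℂ)).const_mul (-q))
    simp only [Function.comp_def, mul_one] at h0
    have h1 : HasDerivAt (fun z : ℂ => Complex.exp (-q * z)) (-q * Complex.exp (-q * x)) (x : ℂ) := by
      exact h0.congr_deriv (mul_comm _ _)
    have h2 : HasDerivAt (fun t : ℝ => Complex.exp (-q * t)) (-q * Complex.exp (-q * x)) x :=
      h1.comp_ofReal
    have h3 := (h2.div_const q).neg
    have heq : -(-q * Complex.exp (-q * x) / q) = Complex.exp (-q * x) := by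
      field_simp
    rw [heq] at h3
    simpa [neg_div, Pi.neg_def] using h3
  have hlim : Tendsto (fun t : ℝ => -Complex.exp (-q * t) / q) atTop (𝓝 0) := by
    rw [tendsto_zero_iff_norm_tendsto_zero]
    have heq : (fun t : ℝ => ‖-Complex.exp (-q * t) / q‖) = fun t => Real.exp (-q.re * t) / ‖q‖ := by
      funext t; rw [norm_div, norm_neg, norm_cexp_neg_mul]
    rw [heq]
    simpa using (tendsto_rexp_neg_mul q.re hq).div_const ‖q‖
  have := MeasureTheory.integral_Ioi_of_hasDerivAt_of_tendsto' hd (integrableOn_cexp_Ioi q hq a) hlim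
  rw [this]
  field_simp
  ring

lemma integral_rexp_Ioi (r : ℝ) (hr : 0 < r) (a : ℝ) :
    ∫ t in Ioi a, Real.exp (-r * t) = Real.exp (-r * a) / r := by
  have h := integral_cexp_Ioi (r : ℂ) (by simpa using hr) a
  have h2 : (∫ t in Ioi a, Complex.exp (-(r:ℂ) * t)) = ((∫ t in Ioi a, Real.exp (-r * t) : ℝ) : ℂ) := by
    rw [show (fun t : ℝ => Complex.exp (-(r:ℂ) * t)) = fun t : ℝ => ((Real.exp (-r * t) : ℝ) : ℂ) from
      funext fun t => by rw [Complex.ofReal_exp]; norm_num]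
    exact integral_ofReal
  rw [h2] at h
  have h3 : ((Real.exp (-r * a) / r : ℝ) : ℂ) = Complex.exp (-(r:ℂ) * a) / r := by
    push_cast [Complex.ofReal_exp]
    norm_num
  rw [← h3] at h
  exact_mod_cast h

noncomputable def convIter (P U : ℝ → ℝ) : ℕ → ℝ → ℝ
  | 0 => U
  | (i+1) => P ⋆[ContinuousLinearMap.mul ℝ ℝ] convIter P U i

variable {P U : ℝ → ℝ}

lemma convIter_succ_apply (P U : ℝ → ℝ) (i : ℕ) (x : ℝ) :
    convIter P U (i+1) x = ∫ t, P t * convIter P U i (x - t) := by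
  rfl

lemma convIter_nonneg (hP : ∀ x, 0 ≤ P x) (hU : ∀ x, 0 ≤ U x) :
    ∀ i x, 0 ≤ convIter P U i x := by
  intro i
  induction i with
  | zero => exact hU
  | succ i ih =>
    intro x
    rw [convIter_succ_apply]
    exact integral_nonneg fun t => mul_nonneg (hP t) (ih _)

lemma convIter_zero_of_neg (hP : ∀ x < 0, P x = 0) (hU : ∀ x < 0, U x = 0) :
    ∀ i, ∀ x < 0, convIter P U i x = 0 := by
  intro i
  induction i with
  | zero => exact hU
  | succ i ih =>
    intro x hx
    rw [convIter_succ_apply]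
    have : ∀ t : ℝ, P t * convIter P U i (x - t) = 0 := by
      intro t
      rcases lt_or_ge t 0 with h | h
      · rw [hP t h, zero_mul]
      · rw [ih (x - t) (by linarith), mul_zero]
    simp [this]

lemma convIter_integrable (hP : Integrable P) (hU : Integrable U) :
    ∀ i, Integrable (convIter P U i) := by
  intro i
  induction i with
  | zero => exact hU
  | succ i ih => exact hP.integrable_convolution (ContinuousLinearMap.mul ℝ ℝ) ih

lemma clap_integrable {q : ℂ} (hq : 0 < q.re) {f : ℝ → ℝ} (hf : Integrable f)
    (hf0 : ∀ x, 0 ≤ f x) (hfz : ∀ x < 0, f x = 0) :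
    Integrable (fun x : ℝ => Complex.exp (-q * x) * (f x : ℂ)) := by
  refine Integrable.mono' hf.norm ?_ ?_
  · exact ((Complex.continuous_exp.comp (by continuity)).aestronglyMeasurable).mul
      (Complex.continuous_ofReal.comp_aestronglyMeasurable hf.aestronglyMeasurable)
  · filter_upwards with x
    rw [norm_mul, norm_cexp_neg_mul, Complex.norm_real]
    rcases lt_or_ge x 0 with h | h
    · rw [hfz x h]; simp
    · have h1 : Real.exp (-q.re * x) ≤ 1 := by
        rw [Real.exp_le_one_iff]
        nlinarith [hq]
      have := abs_nonneg (f x)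
      calc Real.exp (-q.re * x) * |f x| ≤ 1 * |f x| := by
            apply mul_le_mul_of_nonneg_right h1 this
        _ = ‖f x‖ := by simp
lemma convIter_clap {q : ℂ} (hq : 0 < q.re) {P U : ℝ → ℝ}
    (hPint : Integrable P) (hUint : Integrable U)
    (hP0 : ∀ x, 0 ≤ P x) (hU0 : ∀ x, 0 ≤ U x)
    (hPz : ∀ x < 0, P x = 0) (hUz : ∀ x < 0, U x = 0) :
    ∀ i, (∫ x : ℝ, Complex.exp (-q * x) * (convIter P U i x : ℂ))
      = (∫ x : ℝ, Complex.exp (-q * x) * (P x : ℂ)) ^ i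
        * (∫ x : ℝ, Complex.exp (-q * x) * (U x : ℂ)) := by
  intro i
  induction i with
  | zero => simp [convIter]
  | succ i ih =>
    have hGint : Integrable (convIter P U i) := convIter_integrable hPint hUint i
    have hG0 : ∀ x, 0 ≤ convIter P U i x := convIter_nonneg hP0 hU0 i
    have hGz : ∀ x < 0, convIter P U i x = 0 := convIter_zero_of_neg hPz hUz i
    have h1 : Integrable (fun x : ℝ => Complex.exp (-q * x) * (P x : ℂ)) :=
      clap_integrable hq hPint hP0 hPz
    have h2 : Integrable (fun x : ℝ => Complex.exp (-q * x) * (convIter P U i x : ℂ)) :=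
      clap_integrable hq hGint hG0 hGz
    have key : (fun x : ℝ => Complex.exp (-q * x) * (convIter P U (i+1) x : ℂ))
        = (fun t : ℝ => Complex.exp (-q * t) * (P t : ℂ))
          ⋆[ContinuousLinearMap.mul ℂ ℂ] (fun t : ℝ => Complex.exp (-q * t) * (convIter P U i t : ℂ)) := by
      funext x
      rw [convolution_mul]
      have hintegrand : ∀ t : ℝ,
          (Complex.exp (-q * t) * (P t : ℂ)) * (Complex.exp (-q * (x - t : ℝ)) * (convIter P U i (x - t) : ℂ))
          = Complex.exp (-q * x) * ((P t * convIter P U i (x - t) : ℝ) : ℂ) := by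
        intro t
        rw [Complex.ofReal_mul]
        rw [show (-q * t) = -q * (t:ℂ) from rfl]
        have : Complex.exp (-q * (t:ℂ)) * Complex.exp (-q * ((x - t : ℝ) : ℂ))
            = Complex.exp (-q * (x:ℂ)) := by
          rw [← Complex.exp_add]
          congr 1
          push_cast
          ring
        calc (Complex.exp (-q * (t:ℂ)) * (P t : ℂ)) * (Complex.exp (-q * ((x - t:ℝ):ℂ)) * (convIter P U i (x - t) : ℂ))
            = (Complex.exp (-q * (t:ℂ)) * Complex.exp (-q * ((x - t:ℝ):ℂ))) * ((P t : ℂ) * (convIter P U i (x - t) : ℂ)) := by ring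
          _ = Complex.exp (-q * (x:ℂ)) * ((P t : ℂ) * (convIter P U i (x - t) : ℂ)) := by rw [this]
      simp only [hintegrand]
      rw [integral_const_mul]
      congr 1
      rw [convIter_succ_apply]
      exact integral_ofReal.symm
    rw [key, integral_convolution (ContinuousLinearMap.mul ℂ ℂ) h1 h2]
    rw [ih]
    simp only [ContinuousLinearMap.mul_apply']
    ring
lemma renewalTerm_eq_convIter (p u0 : ℝ → ℝ) :
    ∀ i, ∀ τ : ℝ, 0 ≤ τ →
      renewalTerm p u0 i τ
        = convIter ((Ici (0:ℝ)).indicator p) ((Ici (0:ℝ)).indicator u0) i τ := by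
  set P := (Ici (0:ℝ)).indicator p with hP
  set U := (Ici (0:ℝ)).indicator u0 with hU
  have hPz : ∀ x < (0:ℝ), P x = 0 := fun x hx => indicator_of_notMem (by simpa using not_le.mpr hx) p
  have hUz : ∀ x < (0:ℝ), U x = 0 := fun x hx => indicator_of_notMem (by simpa using not_le.mpr hx) u0
  intro i
  induction i with
  | zero =>
    intro τ hτ
    exact (indicator_of_mem hτ u0).symm
  | succ i ih =>
    intro τ hτ
    show (∫ s in (0:ℝ)..τ, p (τ - s) * renewalTerm p u0 i s) = _
    have step1 : (∫ s in (0:ℝ)..τ, p (τ - s) * renewalTerm p u0 i s)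
        = ∫ s in (0:ℝ)..τ, p s * renewalTerm p u0 i (τ - s) := by
      have := intervalIntegral.integral_comp_sub_left
        (f := fun s => p s * renewalTerm p u0 i (τ - s)) (a := (0:ℝ)) (b := τ) τ
      simp only [sub_self, sub_zero] at this
      rw [← this]
      congr 1
      funext s
      congr 2
      ring
    rw [step1, intervalIntegral.integral_of_le hτ, ← integral_Icc_eq_integral_Ioc]
    have step2 : (∫ s in Icc (0:ℝ) τ, p s * renewalTerm p u0 i (τ - s))
        = ∫ s in Icc (0:ℝ) τ, P s * convIter P U i (τ - s) := by
      apply setIntegral_congr_fun measurableSet_Icc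
      intro s hs
      have h1 : P s = p s := indicator_of_mem hs.1 p
      have h2 : renewalTerm p u0 i (τ - s) = convIter P U i (τ - s) := ih _ (by linarith [hs.2])
      simp only []
      rw [← h1, ← h2]
    rw [step2]
    rw [setIntegral_eq_integral_of_forall_compl_eq_zero (fun s hs => ?_)]
    · rw [← convIter_succ_apply]
    · rcases not_and_or.mp (fun hc => hs (mem_Icc.mpr hc)) with h | h
      · rw [hPz s (not_le.mp h), zero_mul]
      · rw [convIter_zero_of_neg hPz hUz i (τ - s) (by linarith [not_le.mp h]), mul_zero]
lemma tsum_ofReal_eq_top_of_not_summable {f : ℕ → ℝ} (hf : ∀ i, 0 ≤ f i)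
    (h : ¬ Summable f) : (∑' i, ENNReal.ofReal (f i)) = ⊤ := by
  by_contra hc
  have h1 : (∑' i, ((f i).toNNReal : ℝ≥0∞)) ≠ ⊤ := by
    simpa [ENNReal.ofReal] using hc
  have h2 := ENNReal.tsum_coe_ne_top_iff_summable.mp h1
  have h3 : Summable f := by
    have := NNReal.summable_coe.mpr h2
    refine this.congr fun i => ?_
    exact Real.coe_toNNReal _ (hf i)
  exact h h3

lemma tsum_toReal_ofReal {f : ℕ → ℝ} (hf : ∀ i, 0 ≤ f i) :
    (∑' i, ENNReal.ofReal (f i)).toReal = ∑' i, f i := by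
  by_cases h : Summable f
  · rw [← ENNReal.ofReal_tsum_of_nonneg hf h, ENNReal.toReal_ofReal (tsum_nonneg hf)]
  · rw [tsum_eq_zero_of_not_summable h, tsum_ofReal_eq_top_of_not_summable hf h]
    simp

lemma ofReal_tsum_le {f : ℕ → ℝ} (hf : ∀ i, 0 ≤ f i) :
    ENNReal.ofReal (∑' i, f i) ≤ ∑' i, ENNReal.ofReal (f i) := by
  rw [← tsum_toReal_ofReal hf]
  exact ENNReal.ofReal_toReal_le
lemma indicator_comp_section {γ M : Type*} [Zero M] (S : Set γ) (f : γ → M) {β : Type*}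
    (e : β → γ) (A' : Set β) (h : ∀ s, e s ∈ S ↔ s ∈ A') :
    (fun s => S.indicator f (e s)) = A'.indicator (fun s => f (e s)) := by
  funext s
  by_cases h' : s ∈ A'
  · rw [indicator_of_mem h', indicator_of_mem ((h s).mpr h')]
  · rw [indicator_of_notMem h', indicator_of_notMem (fun hc => h' ((h s).mp hc))]

set_option maxHeartbeats 2000000 in
/-- With `A(τ) = ∫_0^τ α(s) ds` a strictly increasing continuous
bijection of `[0,∞)` onto itself with inverse `τ(·)`, the initial data satisfies
`û0(q) = (1 − p̂(q)) ∫_0^∞ e^{-q τ(s)} ds` for every complex `q` with `Re q > 0`. -/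
theorem stmt8 (p u0 : ℝ → ℝ) (hp : MemC p) (hpc : ContinuousOn p (Set.Ici 0))
    (hu0 : MemC u0)
    (hmono : StrictMonoOn (renewalFn p u0) (Set.Ici 0))
    (hcont : ContinuousOn (renewalFn p u0) (Set.Ici 0))
    (hbij : Set.BijOn (renewalFn p u0) (Set.Ici 0) (Set.Ici 0))
    (τinv : ℝ → ℝ) (hmaps : ∀ t ∈ Set.Ici (0 : ℝ), τinv t ∈ Set.Ici (0 : ℝ))
    (hinv₁ : ∀ s ∈ Set.Ici (0 : ℝ), τinv (renewalFn p u0 s) = s)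
    (hinv₂ : ∀ t ∈ Set.Ici (0 : ℝ), renewalFn p u0 (τinv t) = t) :
    ∀ q : ℂ, 0 < q.re →
      laplaceFn u0 q
        = (1 - laplaceFn p q)
            * ∫ s in Set.Ici (0 : ℝ), Complex.exp (-q * ((τinv s : ℝ) : ℂ)) := by
  intro q hq
  obtain ⟨hp1, hp2, hp3, hp4, hp5⟩ := hp
  obtain ⟨hu1, hu2, hu3, hu4, hu5⟩ := hu0
  set r : ℝ := q.re with hrdef
  have hr : 0 < r := hq
  have hq0 : q ≠ 0 := fun h => by simp [hrdef, h] at hr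
  set P : ℝ → ℝ := (Ici (0:ℝ)).indicator p with hPdef
  set U : ℝ → ℝ := (Ici (0:ℝ)).indicator u0 with hUdef
  set G : ℕ → ℝ → ℝ := convIter P U with hGdef
  -- basic facts
  have hPz : ∀ x < (0:ℝ), P x = 0 := fun x hx =>
    indicator_of_notMem (by simpa using not_le.mpr hx) p
  have hUz : ∀ x < (0:ℝ), U x = 0 := fun x hx =>
    indicator_of_notMem (by simpa using not_le.mpr hx) u0
  have hP0 : ∀ x, 0 ≤ P x := fun x => by
    rcases le_or_gt 0 x with h | h
    · rw [hPdef, indicator_of_mem (mem_Ici.mpr h)]; exact (hp3 x h).le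
    · rw [hPz x h]
  have hU0 : ∀ x, 0 ≤ U x := fun x => by
    rcases le_or_gt 0 x with h | h
    · rw [hUdef, indicator_of_mem (mem_Ici.mpr h)]; exact (hu3 x h).le
    · rw [hUz x h]
  have hPint : Integrable P := (integrable_indicator_iff measurableSet_Ici).mpr hp2
  have hUint : Integrable U := (integrable_indicator_iff measurableSet_Ici).mpr hu2
  have hGint : ∀ i, Integrable (G i) := convIter_integrable hPint hUint
  have hG0 : ∀ i x, 0 ≤ G i x := fun i x => convIter_nonneg hP0 hU0 i x
  have hGz : ∀ i, ∀ x < (0:ℝ), G i x = 0 := fun i => convIter_zero_of_neg hPz hUz i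
  have hbridge := renewalTerm_eq_convIter p u0
  -- Laplace transforms
  set Lp : ℂ := laplaceFn p q with hLpdef
  set Lu : ℂ := laplaceFn u0 q with hLudef
  have hind_eq : ∀ f : ℝ → ℝ, (∀ x < (0:ℝ), f x = 0) →
      (∫ x : ℝ, Complex.exp (-q * x) * (f x : ℂ)) = ∫ x in Ici (0:ℝ), Complex.exp (-q * x) * (f x : ℂ) := by
    intro f hf
    rw [setIntegral_eq_integral_of_forall_compl_eq_zero
      (fun x hx => by rw [hf x (by simpa using hx)]; simp)]
  have hLp_eq : (∫ x : ℝ, Complex.exp (-q * x) * (P x : ℂ)) = Lp := by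
    rw [hind_eq P hPz, hLpdef, laplaceFn]
    exact setIntegral_congr_fun measurableSet_Ici fun x hx => by
      rw [hPdef, indicator_of_mem hx]
  have hLu_eq : (∫ x : ℝ, Complex.exp (-q * x) * (U x : ℂ)) = Lu := by
    rw [hind_eq U hUz, hLudef, laplaceFn]
    exact setIntegral_congr_fun measurableSet_Ici fun x hx => by
      rw [hUdef, indicator_of_mem hx]
  have hlapG : ∀ i, (∫ x : ℝ, Complex.exp (-q * x) * (G i x : ℂ)) = Lp ^ i * Lu := by
    intro i
    rw [← hLp_eq, ← hLu_eq]
    exact convIter_clap hq hPint hUint hP0 hU0 hPz hUz i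
  -- real Laplace transforms
  set a : ℝ := ∫ x : ℝ, Real.exp (-r * x) * P x with hadef
  set b : ℝ := ∫ x : ℝ, Real.exp (-r * x) * U x with hbdef
  have hcoe : ∀ f : ℝ → ℝ, (∫ x : ℝ, Complex.exp (-(r:ℂ) * x) * (f x : ℂ))
      = ((∫ x : ℝ, Real.exp (-r * x) * f x : ℝ) : ℂ) := by
    intro f
    rw [show (fun x : ℝ => Complex.exp (-(r:ℂ) * x) * (f x : ℂ))
        = fun x : ℝ => ((Real.exp (-r * x) * f x : ℝ) : ℂ) from
      funext fun x => by push_cast [Complex.ofReal_exp]; norm_num]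
    exact integral_ofReal
  have hGr : ∀ i, (∫ x : ℝ, Real.exp (-r * x) * G i x) = a ^ i * b := by
    intro i
    have hrc : (0:ℝ) < ((r:ℂ)).re := by simpa using hr
    have h := convIter_clap (q := (r:ℂ)) hrc hPint hUint hP0 hU0 hPz hUz i
    rw [hcoe, hcoe, hcoe] at h
    exact_mod_cast h
  have ha0 : 0 ≤ a := integral_nonneg fun x => mul_nonneg (Real.exp_nonneg _) (hP0 x)
  have hb0 : 0 ≤ b := integral_nonneg fun x => mul_nonneg (Real.exp_nonneg _) (hU0 x)
  -- `a < 1`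
  have hEp_int : IntegrableOn (fun x => Real.exp (-r * x) * p x) (Ici 0) := by
    refine Integrable.mono' hp2.norm ?_ ?_
    · exact ((Real.continuous_exp.comp (by continuity)).aestronglyMeasurable).mul
        hp2.aestronglyMeasurable
    · filter_upwards [ae_restrict_mem measurableSet_Ici] with x hx
      have h1 : Real.exp (-r * x) ≤ 1 := Real.exp_le_one_iff.mpr
        (by nlinarith [mul_nonneg hr.le (mem_Ici.mp hx)])
      rw [norm_mul, Real.norm_eq_abs (Real.exp _), _root_.abs_of_nonneg (Real.exp_nonneg _),
        Real.norm_eq_abs]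
      calc Real.exp (-r * x) * |p x| ≤ 1 * |p x| :=
            mul_le_mul_of_nonneg_right h1 (abs_nonneg _)
        _ = ‖p x‖ := by simp [Real.norm_eq_abs]
  have ha_eq : a = ∫ x in Ici (0:ℝ), Real.exp (-r * x) * p x := by
    have h1 : (∫ x : ℝ, Real.exp (-r * x) * P x)
        = ∫ x in Ici (0:ℝ), Real.exp (-r * x) * P x :=
      (setIntegral_eq_integral_of_forall_compl_eq_zero
        (fun x hx => by rw [hPz x (by simpa using hx)]; simp)).symm
    rw [hadef, h1]
    exact setIntegral_congr_fun measurableSet_Ici fun x hx => by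
      rw [hPdef, indicator_of_mem hx]
  have ha1 : a < 1 := by
    have hD0 : 0 ≤ᵐ[volume.restrict (Ici (0:ℝ))]
        fun x => p x - Real.exp (-r * x) * p x := by
      filter_upwards [ae_restrict_mem measurableSet_Ici] with x hx
      have h1 : Real.exp (-r * x) ≤ 1 := Real.exp_le_one_iff.mpr
        (by nlinarith [mul_nonneg hr.le (mem_Ici.mp hx)])
      simp only [Pi.zero_apply]
      nlinarith [hp3 x hx, Real.exp_nonneg (-r * x)]
    have hDint : IntegrableOn (fun x => p x - Real.exp (-r * x) * p x) (Ici 0) :=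
      hp2.sub hEp_int
    have hDval : (∫ x in Ici (0:ℝ), (p x - Real.exp (-r * x) * p x)) = 1 - a := by
      rw [integral_sub hp2 hEp_int, hp4, ha_eq]
    have hDne : (∫ x in Ici (0:ℝ), (p x - Real.exp (-r * x) * p x)) ≠ 0 := by
      intro hzero
      have := (integral_eq_zero_iff_of_nonneg_ae hD0 hDint).mp hzero
      have hmeas0 : volume ({x : ℝ | p x - Real.exp (-r * x) * p x ≠ 0} ∩ Ici 0) = 0 := by
        have h2 := this
        rw [Filter.EventuallyEq, ae_iff] at h2
        rw [← Measure.restrict_apply' measurableSet_Ici]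
        simpa using h2
      have hsub : Ioi (0:ℝ) ⊆ {x : ℝ | p x - Real.exp (-r * x) * p x ≠ 0} ∩ Ici 0 := by
        intro x hx
        have hx0 : (0:ℝ) < x := hx
        have hexp : Real.exp (-r * x) < 1 := by
          rw [Real.exp_lt_one_iff]
          nlinarith
        have hpx : 0 < p x := hp3 x hx0.le
        constructor
        · simp only [mem_setOf_eq]
          nlinarith
        · exact hx0.le
      have := measure_mono_null hsub hmeas0
      rw [Real.volume_Ioi] at this
      exact ENNReal.top_ne_zero this
    have hDpos : 0 < ∫ x in Ici (0:ℝ), (p x - Real.exp (-r * x) * p x) :=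
      lt_of_le_of_ne (integral_nonneg_of_ae hD0) (Ne.symm hDne)
    rw [hDval] at hDpos
    linarith
  -- norm bound on Lp
  have hLpa : ‖Lp‖ ≤ a := by
    rw [← hLp_eq]
    calc ‖∫ x : ℝ, Complex.exp (-q * x) * (P x : ℂ)‖
        ≤ ∫ x : ℝ, ‖Complex.exp (-q * x) * (P x : ℂ)‖ := norm_integral_le_integral_norm _
      _ = a := by
          rw [hadef]
          congr 1
          funext x
          rw [norm_mul, norm_cexp_neg_mul, Complex.norm_real, Real.norm_eq_abs,
            _root_.abs_of_nonneg (hP0 x)]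
  have hLp1 : ‖Lp‖ < 1 := lt_of_le_of_lt hLpa ha1
  have hLpne : (1:ℂ) - Lp ≠ 0 := by
    intro h
    have : Lp = 1 := by linear_combination -h
    rw [this] at hLp1
    simp at hLp1
  -- the renewal density
  set αA : ℝ → ℝ := fun s => ∑' i, G i s with hαdef
  have hα0 : ∀ s, 0 ≤ αA s := fun s => tsum_nonneg fun i => hG0 i s
  have hαz : ∀ s < (0:ℝ), αA s = 0 := by
    intro s hs
    rw [hαdef]
    simp only []
    rw [show (fun i => G i s) = fun _ => (0:ℝ) from funext fun i => hGz i s hs]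
    exact tsum_zero
  have hren : ∀ s : ℝ, 0 ≤ s → renewalDensity p u0 s = αA s := by
    intro s hs
    rw [renewalDensity, hαdef]
    exact tsum_congr fun i => hbridge i s hs
  have hαmeas : AEMeasurable αA := by
    have hβ : AEMeasurable (fun s => ∑' i, ENNReal.ofReal (G i s)) :=
      AEMeasurable.ennreal_tsum fun i =>
        ENNReal.measurable_ofReal.comp_aemeasurable (hGint i).aemeasurable
    have : αA = fun s => (∑' i, ENNReal.ofReal (G i s)).toReal := by
      funext s
      rw [hαdef]
      exact (tsum_toReal_ofReal fun i => hG0 i s).symm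
    rw [this]
    exact hβ.ennreal_toReal
  have hαsm : AEStronglyMeasurable αA volume := hαmeas.aestronglyMeasurable
  -- integrability of the weighted terms
  have hFqint : ∀ i, Integrable (fun x : ℝ => Complex.exp (-q * x) * (G i x : ℂ)) :=
    fun i => clap_integrable hq (hGint i) (hG0 i) (hGz i)
  have hnorm_i : ∀ i (x : ℝ), ‖Complex.exp (-q * x) * (G i x : ℂ)‖ = Real.exp (-r * x) * G i x := by
    intro i x
    rw [norm_mul, norm_cexp_neg_mul, Complex.norm_real, Real.norm_eq_abs,
      _root_.abs_of_nonneg (hG0 i x)]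
  have hEGint : ∀ i, Integrable (fun x => Real.exp (-r * x) * G i x) := by
    intro i
    refine ((hFqint i).norm).congr ?_
    filter_upwards with x
    rw [hnorm_i i x]
  have hlint2 : ∀ i, (∫⁻ x, ENNReal.ofReal (Real.exp (-r * x) * G i x))
      = ENNReal.ofReal (a ^ i * b) := by
    intro i
    rw [← ofReal_integral_eq_lintegral_ofReal (hEGint i)
      (Filter.Eventually.of_forall fun x => mul_nonneg (Real.exp_nonneg _) (hG0 i x)), hGr i]
  have hgeom : (∑' i : ℕ, ENNReal.ofReal (a ^ i * b)) ≠ ⊤ := by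
    have h1 : ∀ i : ℕ, ENNReal.ofReal (a ^ i * b)
        = ENNReal.ofReal a ^ i * ENNReal.ofReal b := by
      intro i
      rw [ENNReal.ofReal_mul (pow_nonneg ha0 i), ENNReal.ofReal_pow ha0]
    rw [tsum_congr h1, ENNReal.tsum_mul_right, ENNReal.tsum_geometric]
    refine ENNReal.mul_ne_top ?_ ENNReal.ofReal_ne_top
    rw [Ne, ENNReal.inv_eq_top, tsub_eq_zero_iff_le]
    exact not_le.mpr (ENNReal.ofReal_lt_one.mpr ha1)
  have hMser : (∑' i : ℕ, ∫⁻ x : ℝ, (‖Complex.exp (-q * x) * (G i x : ℂ)‖₊ : ℝ≥0∞)) ≠ ⊤ := by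
    have h1 : ∀ i : ℕ, (∫⁻ x : ℝ, (‖Complex.exp (-q * x) * (G i x : ℂ)‖₊ : ℝ≥0∞))
        = ENNReal.ofReal (a ^ i * b) := by
      intro i
      rw [← hlint2 i]
      congr 1
      funext x
      rw [← enorm_eq_nnnorm, ← ofReal_norm, hnorm_i i x]
    rw [tsum_congr h1]
    exact hgeom
  -- finiteness of the weighted integral of αA
  set M : ℝ≥0∞ := ∫⁻ x, ENNReal.ofReal (Real.exp (-r * x) * αA x) with hMdef
  have hM : M ≠ ⊤ := by
    have hle : ∀ x : ℝ, ENNReal.ofReal (Real.exp (-r * x) * αA x)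
        ≤ ∑' i, ENNReal.ofReal (Real.exp (-r * x) * G i x) := by
      intro x
      rw [ENNReal.ofReal_mul (Real.exp_nonneg _)]
      have h1 : (∑' i, ENNReal.ofReal (Real.exp (-r * x) * G i x))
          = ENNReal.ofReal (Real.exp (-r * x)) * ∑' i, ENNReal.ofReal (G i x) := by
        rw [← ENNReal.tsum_mul_left]
        exact tsum_congr fun i => ENNReal.ofReal_mul (Real.exp_nonneg _)
      rw [h1]
      exact mul_le_mul_right (ofReal_tsum_le fun i => hG0 i x) _
    have h2 : M ≤ ∑' i, ∫⁻ x, ENNReal.ofReal (Real.exp (-r * x) * G i x) := by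
      rw [← lintegral_tsum (f := fun i x => ENNReal.ofReal (Real.exp (-r * x) * G i x))
        (fun i => (ENNReal.measurable_ofReal.comp_aemeasurable (hEGint i).aemeasurable : _))]
      exact lintegral_mono hle
    rw [tsum_congr hlint2] at h2
    exact ne_top_of_le_ne_top hgeom h2
  have hEαint : Integrable (fun s => Real.exp (-r * s) * αA s) := by
    refine ⟨((Real.continuous_exp.comp (continuous_const.mul continuous_id)).aestronglyMeasurable).mul hαsm, ?_⟩
    rw [hasFiniteIntegral_iff_norm]
    have : ∀ s : ℝ, ENNReal.ofReal ‖Real.exp (-r * s) * αA s‖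
        = ENNReal.ofReal (Real.exp (-r * s) * αA s) := by
      intro s
      rw [Real.norm_eq_abs, _root_.abs_of_nonneg (mul_nonneg (Real.exp_nonneg _) (hα0 s))]
    rw [show (fun s : ℝ => ENNReal.ofReal ‖Real.exp (-r * s) * αA s‖)
        = fun s => ENNReal.ofReal (Real.exp (-r * s) * αA s) from funext this]
    exact lt_of_le_of_ne le_top hM
  -- local integrability of αA
  have hαloc : ∀ t : ℝ, 0 ≤ t → IntegrableOn αA (Ioc 0 t) := by
    intro t ht
    refine Integrable.mono' ((hEαint.const_mul (Real.exp (r * t))).integrableOn) hαsm.restrict ?_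
    filter_upwards [ae_restrict_mem measurableSet_Ioc] with s hs
    rw [Real.norm_eq_abs, _root_.abs_of_nonneg (hα0 s)]
    have h1 : Real.exp (-r * s) * Real.exp (r * t) ≥ 1 := by
      rw [← Real.exp_add]
      have : 0 ≤ -r * s + r * t := by nlinarith [hs.1.le, hs.2, hr.le]
      calc (1:ℝ) = Real.exp 0 := (Real.exp_zero).symm
        _ ≤ Real.exp (-r * s + r * t) := Real.exp_le_exp.mpr this
    nlinarith [hα0 s, Real.exp_nonneg (-r * s), Real.exp_nonneg (r * t)]
  -- the renewal function and its measurable surrogate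
  set Abar : ℝ → ℝ := fun t => (∫⁻ s in Ioc 0 t, ENNReal.ofReal (αA s)).toReal with hAbardef
  have hAbarmeas : Measurable Abar := by
    have hmono' : Monotone fun t => ∫⁻ s in Ioc 0 t, ENNReal.ofReal (αA s) :=
      fun t1 t2 h => lintegral_mono_set (Ioc_subset_Ioc_right h)
    exact hmono'.measurable.ennreal_toReal
  have hAbar0 : ∀ t, 0 ≤ Abar t := fun t => ENNReal.toReal_nonneg
  have hIval : ∀ t : ℝ, (∫ s in Ioc 0 t, αA s) = Abar t := by
    intro t
    rw [integral_eq_lintegral_of_nonneg_ae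
      (Filter.Eventually.of_forall fun s => hα0 s) hαsm.restrict]
  have hA : ∀ t : ℝ, 0 ≤ t → renewalFn p u0 t = Abar t := by
    intro t ht
    rw [renewalFn, intervalIntegral.integral_of_le ht, ← hIval t]
    exact setIntegral_congr_fun measurableSet_Ioc fun s hs => hren s hs.1.le
  -- key integrability (Lemma D)
  have hexpm : Measurable fun t : ℝ => Real.exp (-r * t) :=
    (Real.continuous_exp.comp (continuous_const.mul continuous_id)).measurable
  have hDkey : Integrable ((Ici (0:ℝ)).indicator fun t => Real.exp (-r * t) * Abar t) := by
    constructor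
    · exact ((hexpm.mul hAbarmeas).indicator measurableSet_Ici).aestronglyMeasurable
    · rw [hasFiniteIntegral_iff_norm]
      have hpt : ∀ t : ℝ, ENNReal.ofReal ‖(Ici (0:ℝ)).indicator (fun t => Real.exp (-r * t) * Abar t) t‖
          = (Ici (0:ℝ)).indicator (fun t => ENNReal.ofReal (Real.exp (-r * t) * Abar t)) t := by
        intro t
        rcases le_or_gt 0 t with ht | ht
        · rw [indicator_of_mem (mem_Ici.mpr ht), indicator_of_mem (mem_Ici.mpr ht),
            Real.norm_eq_abs, _root_.abs_of_nonneg (mul_nonneg (Real.exp_nonneg _) (hAbar0 t))]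
        · rw [indicator_of_notMem (by simpa using not_le.mpr ht),
            indicator_of_notMem (by simpa using not_le.mpr ht)]
          simp
      rw [show (fun t : ℝ => ENNReal.ofReal
            ‖(Ici (0:ℝ)).indicator (fun t => Real.exp (-r * t) * Abar t) t‖)
          = (Ici (0:ℝ)).indicator (fun t => ENNReal.ofReal (Real.exp (-r * t) * Abar t)) from
        funext hpt]
      rw [lintegral_indicator measurableSet_Ici]
      set S2 : Set (ℝ × ℝ) := {z : ℝ × ℝ | 0 < z.2 ∧ z.2 ≤ z.1} with hS2def
      have hS2meas : MeasurableSet S2 :=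
        (measurableSet_lt measurable_const measurable_snd).inter
          (measurableSet_le measurable_snd measurable_fst)
      set g : ℝ × ℝ → ℝ≥0∞ := fun z =>
        S2.indicator (fun z => ENNReal.ofReal (Real.exp (-r * z.1)) * ENNReal.ofReal (αA z.2)) z
        with hgdef
      have hgm : AEMeasurable g (volume.prod volume) := by
        refine AEMeasurable.indicator ?_ hS2meas
        exact ((ENNReal.measurable_ofReal.comp (hexpm.comp measurable_fst)).aemeasurable).mul
          (ENNReal.measurable_ofReal.comp_aemeasurable
            (hαmeas.comp_quasiMeasurePreserving Measure.quasiMeasurePreserving_snd))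
      have hsec : ∀ t : ℝ, (∫⁻ s, g (t, s))
          = ENNReal.ofReal (Real.exp (-r * t)) * ∫⁻ s in Ioc 0 t, ENNReal.ofReal (αA s) := by
        intro t
        have h1 : (fun s => g (t, s)) = (Ioc 0 t).indicator
            (fun s => ENNReal.ofReal (Real.exp (-r * t)) * ENNReal.ofReal (αA s)) := by
          rw [hgdef, hS2def]
          exact indicator_comp_section _ _ _ _
            (fun s => by simp only [mem_setOf_eq, mem_Ioc])
        rw [h1, lintegral_indicator measurableSet_Ioc,
          lintegral_const_mul'' (f := fun s => ENNReal.ofReal (αA s)) _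
            ((ENNReal.measurable_ofReal.comp_aemeasurable hαmeas).restrict : _)]
      calc (∫⁻ t in Ici (0:ℝ), ENNReal.ofReal (Real.exp (-r * t) * Abar t))
          ≤ ∫⁻ t : ℝ, ∫⁻ s : ℝ, g (t, s) := by
            refine le_trans (setLIntegral_le_lintegral _ _) (lintegral_mono fun t => ?_)
            rw [hsec t, ENNReal.ofReal_mul (Real.exp_nonneg _)]
            refine mul_le_mul_right ?_ _
            rw [hAbardef]
            exact ENNReal.ofReal_toReal_le
        _ = ∫⁻ s : ℝ, ∫⁻ t : ℝ, g (t, s) := lintegral_lintegral_swap hgm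
        _ ≤ ∫⁻ s : ℝ, ENNReal.ofReal (1/r) * ENNReal.ofReal (Real.exp (-r * s) * αA s) := by
            refine lintegral_mono fun s => ?_
            rcases lt_or_ge 0 s with hs | hs
            · have h1 : (fun t => g (t, s)) = (Ici s).indicator
                  (fun t => ENNReal.ofReal (Real.exp (-r * t)) * ENNReal.ofReal (αA s)) := by
                rw [hgdef, hS2def]
                exact indicator_comp_section _ _ _ _
                  (fun t => by simp only [mem_setOf_eq, mem_Ici]; exact ⟨fun h => h.2, fun h => ⟨hs, h⟩⟩)
              rw [h1, lintegral_indicator measurableSet_Ici,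
                lintegral_mul_const'' (f := fun t => ENNReal.ofReal (Real.exp (-r * t))) _
                  ((ENNReal.measurable_ofReal.comp hexpm).aemeasurable.restrict : _)]
              have h2 : (∫⁻ t in Ici s, ENNReal.ofReal (Real.exp (-r * t)))
                  = ENNReal.ofReal (Real.exp (-r * s) / r) := by
                rw [← setLIntegral_congr (Ioi_ae_eq_Ici (a := s))]
                rw [← ofReal_integral_eq_lintegral_ofReal (exp_neg_integrableOn_Ioi s hr)
                  (Filter.Eventually.of_forall fun t => Real.exp_nonneg _)]
                rw [integral_rexp_Ioi r hr s]
              rw [h2]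
              refine le_of_eq ?_
              rw [← ENNReal.ofReal_mul (by positivity), ← ENNReal.ofReal_mul (by positivity)]
              congr 1
              ring
            · have h1 : (fun t => g (t, s)) = fun _ => 0 := by
                rw [hgdef, hS2def]
                have := indicator_comp_section
                  (M := ℝ≥0∞) {z : ℝ × ℝ | 0 < z.2 ∧ z.2 ≤ z.1}
                  (fun z => ENNReal.ofReal (Real.exp (-r * z.1)) * ENNReal.ofReal (αA z.2))
                  (fun t : ℝ => (t, s)) (∅ : Set ℝ)
                  (fun t => by simp only [mem_setOf_eq, mem_empty_iff_false, iff_false, not_and]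
                               intro h; exact absurd h (not_lt.mpr hs))
                rw [this]
                simp
              rw [h1, lintegral_zero]
              exact zero_le
        _ = ENNReal.ofReal (1/r) * M := by
            rw [lintegral_const_mul'' (f := fun s => ENNReal.ofReal (Real.exp (-r * s) * αA s)) _
              ((ENNReal.measurable_ofReal.comp_aemeasurable
                (((hEαint.aestronglyMeasurable).aemeasurable : AEMeasurable _ volume))) : _)]
        _ < ⊤ := ENNReal.mul_lt_top (lt_top_iff_ne_top.mpr ENNReal.ofReal_ne_top)
            (lt_top_iff_ne_top.mpr hM)
  -- Fubini block 1
  have hcexp_cont : Continuous fun t : ℝ => Complex.exp (-q * t) :=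
    Complex.continuous_exp.comp (continuous_const.mul Complex.continuous_ofReal)
  set S : Set (ℝ × ℝ) := {z : ℝ × ℝ | 0 ≤ z.1 ∧ 0 ≤ z.2 ∧ z.1 < Abar z.2} with hSdef
  have hSmeas : MeasurableSet S := by
    rw [hSdef]
    refine MeasurableSet.inter (measurableSet_le measurable_const measurable_fst) ?_
    · exact (measurableSet_le measurable_const measurable_snd).inter
        (measurableSet_lt measurable_fst (hAbarmeas.comp measurable_snd))
  have hsec_s : ∀ s : ℝ, 0 ≤ s → ∀ t : ℝ, ((s, t) ∈ S ↔ t ∈ Ioi (τinv s)) := by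
    intro s hs t
    rw [hSdef]
    simp only [mem_setOf_eq, mem_Ioi]
    constructor
    · rintro ⟨-, ht0, hlt⟩
      rw [← hA t ht0] at hlt
      by_contra hc
      have hc' : t ≤ τinv s := not_lt.mp hc
      have hle : renewalFn p u0 t ≤ renewalFn p u0 (τinv s) :=
        hmono.monotoneOn ht0 (hmaps s hs) hc'
      rw [hinv₂ s hs] at hle
      linarith
    · intro ht
      have ht0 : 0 ≤ t := le_trans (hmaps s hs) ht.le
      refine ⟨hs, ht0, ?_⟩
      rw [← hA t ht0]
      have hlt := hmono (hmaps s hs) ht0 ht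
      rwa [hinv₂ s hs] at hlt
  have hsec_s0 : ∀ s : ℝ, s < 0 → ∀ t : ℝ, ((s, t) ∈ S ↔ t ∈ (∅ : Set ℝ)) := by
    intro s hs t
    rw [hSdef]
    simp only [mem_setOf_eq, mem_empty_iff_false, iff_false]
    rintro ⟨h1, -, -⟩
    exact absurd h1 (not_le.mpr hs)
  have hsec_t : ∀ t : ℝ, 0 ≤ t → ∀ s : ℝ, ((s, t) ∈ S ↔ s ∈ Ico 0 (Abar t)) := by
    intro t ht s
    rw [hSdef]
    simp only [mem_setOf_eq, mem_Ico]
    exact ⟨fun h => ⟨h.1, h.2.2⟩, fun h => ⟨h.1, ht, h.2⟩⟩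
  have hsec_t0 : ∀ t : ℝ, t < 0 → ∀ s : ℝ, ((s, t) ∈ S ↔ s ∈ (∅ : Set ℝ)) := by
    intro t ht s
    rw [hSdef]
    simp only [mem_setOf_eq, mem_empty_iff_false, iff_false]
    rintro ⟨-, h2, -⟩
    exact absurd h2 (not_le.mpr ht)
  set W : ℝ × ℝ → ℂ := S.indicator (fun z => q * Complex.exp (-q * z.2)) with hWdef
  have hWm : Measurable W := by
    rw [hWdef]
    exact ((continuous_const.mul (hcexp_cont.comp continuous_snd)).measurable).indicator hSmeas
  have hsecW_t : ∀ t : ℝ, 0 ≤ t →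
      (fun s => W (s, t)) = (Ico 0 (Abar t)).indicator (fun _ => q * Complex.exp (-q * t)) := by
    intro t ht
    rw [hWdef]
    exact indicator_comp_section S _ (fun s => (s, t)) _ (hsec_t t ht)
  have hsecW_t0 : ∀ t : ℝ, t < 0 → (fun s => W (s, t)) = fun _ => (0:ℂ) := by
    intro t ht
    rw [hWdef]
    rw [indicator_comp_section S _ (fun s => (s, t)) _ (hsec_t0 t ht)]
    simp
  have hsecW_s : ∀ s : ℝ, 0 ≤ s →
      (fun t => W (s, t)) = (Ioi (τinv s)).indicator (fun t => q * Complex.exp (-q * t)) := by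
    intro s hs
    rw [hWdef]
    exact indicator_comp_section S _ (fun t => (s, t)) _ (hsec_s s hs)
  have hsecW_s0 : ∀ s : ℝ, s < 0 → (fun t => W (s, t)) = fun _ => (0:ℂ) := by
    intro s hs
    rw [hWdef]
    rw [indicator_comp_section S _ (fun t => (s, t)) _ (hsec_s0 s hs)]
    simp
  have hVind : Integrable (Function.uncurry fun t s => W (s, t))
      ((volume : Measure ℝ).prod volume) := by
    have hVm : AEStronglyMeasurable (Function.uncurry fun t s => W (s, t))
        (volume.prod volume) := by
      have heq : (Function.uncurry fun t s => W (s, t)) = W ∘ Prod.swap := rfl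
      rw [heq]
      exact (hWm.comp measurable_swap).aestronglyMeasurable
    refine (integrable_prod_iff hVm).mpr ⟨?_, ?_⟩
    · refine Filter.Eventually.of_forall fun t => ?_
      rcases le_or_gt 0 t with ht | ht
      · rw [show (fun y => Function.uncurry (fun t s => W (s, t)) (t, y)) = fun s => W (s, t) from rfl,
          hsecW_t t ht]
        exact (integrableOn_const measure_Ico_lt_top.ne).integrable_indicator
          measurableSet_Ico
      · rw [show (fun y => Function.uncurry (fun t s => W (s, t)) (t, y)) = fun s => W (s, t) from rfl,
          hsecW_t0 t ht]
        exact integrable_zero _ _ _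
    · have hptv : ∀ t : ℝ, (∫ s, ‖W (s, t)‖)
          = (Ici (0:ℝ)).indicator (fun t => Real.exp (-r * t) * Abar t) t * ‖q‖ := by
        intro t
        rcases le_or_gt 0 t with ht | ht
        · rw [show (fun s => ‖W (s, t)‖) = fun s => ‖(fun s => W (s, t)) s‖ from rfl]
          rw [hsecW_t t ht]
          rw [show (fun s => ‖(Ico 0 (Abar t)).indicator (fun _ => q * Complex.exp (-q * t)) s‖)
              = (Ico 0 (Abar t)).indicator fun _ => ‖q * Complex.exp (-q * t)‖ from
            funext fun s => norm_indicator_eq_indicator_norm _ s]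
          rw [integral_indicator_const _ measurableSet_Ico]
          rw [Real.volume_real_Ico_of_le (hAbar0 t), sub_zero,
            indicator_of_mem (mem_Ici.mpr ht), norm_mul, norm_cexp_neg_mul]
          simp only [smul_eq_mul]
          ring
        · rw [show (fun s => ‖W (s, t)‖) = fun s => ‖(fun s => W (s, t)) s‖ from rfl]
          rw [hsecW_t0 t ht, indicator_of_notMem (by simpa using not_le.mpr ht)]
          simp
      rw [show (fun x => ∫ y, ‖Function.uncurry (fun t s => W (s, t)) (x, y)‖)
          = fun t => ∫ s, ‖W (s, t)‖ from rfl]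
      rw [show (fun t => ∫ s, ‖W (s, t)‖)
          = fun t => (Ici (0:ℝ)).indicator (fun t => Real.exp (-r * t) * Abar t) t * ‖q‖ from
        funext hptv]
      exact hDkey.mul_const _
  have hswap1 : (∫ t : ℝ, ∫ s : ℝ, W (s, t)) = ∫ s : ℝ, ∫ t : ℝ, W (s, t) :=
    integral_integral_swap hVind
  have hI1 : (∫ s : ℝ, ∫ t : ℝ, W (s, t))
      = ∫ s in Ici (0:ℝ), Complex.exp (-q * (τinv s : ℝ)) := by
    rw [← integral_indicator measurableSet_Ici]
    congr 1
    funext s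
    rcases le_or_gt 0 s with hs | hs
    · rw [show (∫ t : ℝ, W (s, t)) = ∫ t : ℝ, (fun t => W (s, t)) t from rfl, hsecW_s s hs,
        integral_indicator measurableSet_Ioi, indicator_of_mem (mem_Ici.mpr hs)]
      rw [MeasureTheory.integral_const_mul, integral_cexp_Ioi q hq (τinv s)]
      field_simp
    · rw [show (∫ t : ℝ, W (s, t)) = ∫ t : ℝ, (fun t => W (s, t)) t from rfl, hsecW_s0 s hs,
        indicator_of_notMem (by simpa using not_le.mpr hs)]
      simp
  have hI2 : (∫ t : ℝ, ∫ s : ℝ, W (s, t))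
      = ∫ t in Ici (0:ℝ), (q * Complex.exp (-q * t)) * ((Abar t : ℝ) : ℂ) := by
    rw [← integral_indicator measurableSet_Ici]
    congr 1
    funext t
    rcases le_or_gt 0 t with ht | ht
    · rw [show (∫ s : ℝ, W (s, t)) = ∫ s : ℝ, (fun s => W (s, t)) s from rfl, hsecW_t t ht,
        integral_indicator_const _ measurableSet_Ico, indicator_of_mem (mem_Ici.mpr ht)]
      rw [Real.volume_real_Ico_of_le (hAbar0 t), sub_zero]
      rw [Complex.real_smul]
      ring
    · rw [show (∫ s : ℝ, W (s, t)) = ∫ s : ℝ, (fun s => W (s, t)) s from rfl, hsecW_t0 t ht,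
        indicator_of_notMem (by simpa using not_le.mpr ht)]
      simp
  -- Fubini block 2
  set S2 : Set (ℝ × ℝ) := {z : ℝ × ℝ | 0 < z.2 ∧ z.2 ≤ z.1} with hS2def
  have hS2meas : MeasurableSet S2 := by
    rw [hS2def]
    exact (measurableSet_lt measurable_const measurable_snd).inter
      (measurableSet_le measurable_snd measurable_fst)
  set W2 : ℝ × ℝ → ℂ :=
    S2.indicator (fun z => (q * Complex.exp (-q * z.1)) * ((αA z.2 : ℝ) : ℂ)) with hW2def
  have hW2m : AEStronglyMeasurable W2 (volume.prod volume) := by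
    rw [hW2def]
    refine AEStronglyMeasurable.indicator ?_ hS2meas
    refine AEStronglyMeasurable.mul ?_ ?_
    · exact (continuous_const.mul (hcexp_cont.comp continuous_fst)).aestronglyMeasurable
    · exact (Complex.measurable_ofReal.comp_aemeasurable
        (hαmeas.comp_quasiMeasurePreserving Measure.quasiMeasurePreserving_snd)).aestronglyMeasurable
  have hsecW2_t : ∀ t : ℝ, (fun s => W2 (t, s))
      = (Ioc 0 t).indicator (fun s => (q * Complex.exp (-q * t)) * ((αA s : ℝ) : ℂ)) := by
    intro t
    rw [hW2def]
    exact indicator_comp_section S2 _ (fun s => (t, s)) _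
      (fun s => by rw [hS2def]; simp only [mem_setOf_eq, mem_Ioc])
  have hsecW2_s : ∀ s : ℝ, 0 < s → (fun t => W2 (t, s))
      = (Ici s).indicator (fun t => (q * Complex.exp (-q * t)) * ((αA s : ℝ) : ℂ)) := by
    intro s hs
    rw [hW2def]
    exact indicator_comp_section S2 _ (fun t => (t, s)) _
      (fun t => by
        rw [hS2def]
        simp only [mem_setOf_eq, mem_Ici]
        exact ⟨fun h => h.2, fun h => ⟨hs, h⟩⟩)
  have hsecW2_s0 : ∀ s : ℝ, s ≤ 0 → (fun t => W2 (t, s)) = fun _ => (0:ℂ) := by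
    intro s hs
    rw [hW2def]
    rw [indicator_comp_section S2 _ (fun t => (t, s)) (∅ : Set ℝ)
      (fun t => by
        rw [hS2def]
        simp only [mem_setOf_eq, mem_empty_iff_false, iff_false]
        rintro ⟨h1, -⟩
        exact absurd h1 (not_lt.mpr hs))]
    simp
  have hW2ind : Integrable (Function.uncurry fun t s => W2 (t, s)) (volume.prod volume) := by
    refine (integrable_prod_iff
      (by rw [show (Function.uncurry fun t s => W2 (t, s)) = W2 from rfl]; exact hW2m)).mpr
      ⟨?_, ?_⟩
    · refine Filter.Eventually.of_forall fun t => ?_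
      rw [show (fun y => Function.uncurry (fun t s => W2 (t, s)) (t, y)) = fun s => W2 (t, s)
        from rfl, hsecW2_t t]
      rcases le_or_gt 0 t with ht | ht
      · exact MeasureTheory.IntegrableOn.integrable_indicator
          (((hαloc t ht).ofReal (𝕜 := ℂ)).const_mul _) measurableSet_Ioc
      · rw [Ioc_eq_empty (not_lt.mpr ht.le)]
        simp only [Set.indicator_empty]
        exact integrable_zero _ _ _
    · have hptv : ∀ t : ℝ, (∫ s, ‖W2 (t, s)‖)
          = (Ici (0:ℝ)).indicator (fun t => Real.exp (-r * t) * Abar t) t * ‖q‖ := by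
        intro t
        rw [show (fun s => ‖W2 (t, s)‖) = fun s => ‖(fun s => W2 (t, s)) s‖ from rfl, hsecW2_t t]
        rw [show (fun s => ‖(Ioc 0 t).indicator
              (fun s => (q * Complex.exp (-q * t)) * ((αA s : ℝ) : ℂ)) s‖)
            = (Ioc 0 t).indicator (fun s => ‖(q * Complex.exp (-q * t)) * ((αA s : ℝ) : ℂ)‖) from
          funext fun s => norm_indicator_eq_indicator_norm _ s]
        rw [integral_indicator measurableSet_Ioc]
        rw [show (∫ s in Ioc 0 t, ‖(q * Complex.exp (-q * t)) * ((αA s : ℝ) : ℂ)‖)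
            = ∫ s in Ioc 0 t, (‖q‖ * Real.exp (-r * t)) * αA s from
          setIntegral_congr_fun measurableSet_Ioc fun s _ => by
            rw [norm_mul, norm_mul, norm_cexp_neg_mul, Complex.norm_real, Real.norm_eq_abs,
              _root_.abs_of_nonneg (hα0 s)]]
        rw [MeasureTheory.integral_const_mul, hIval t]
        rcases le_or_gt 0 t with ht | ht
        · rw [indicator_of_mem (mem_Ici.mpr ht)]
          ring
        · rw [indicator_of_notMem (by simpa using not_le.mpr ht)]
          have hAe : Abar t = 0 := by
            rw [hAbardef]
            simp only []
            rw [Ioc_eq_empty (not_lt.mpr ht.le)]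
            simp
          rw [hAe]
          ring
      rw [show (fun x => ∫ y, ‖Function.uncurry (fun t s => W2 (t, s)) (x, y)‖)
          = fun t => ∫ s, ‖W2 (t, s)‖ from rfl]
      rw [show (fun t => ∫ s, ‖W2 (t, s)‖)
          = fun t => (Ici (0:ℝ)).indicator (fun t => Real.exp (-r * t) * Abar t) t * ‖q‖ from
        funext hptv]
      exact hDkey.mul_const _
  have hswap2 : (∫ t : ℝ, ∫ s : ℝ, W2 (t, s)) = ∫ s : ℝ, ∫ t : ℝ, W2 (t, s) :=
    integral_integral_swap hW2ind
  have hJ1 : (∫ t : ℝ, ∫ s : ℝ, W2 (t, s))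
      = ∫ t in Ici (0:ℝ), (q * Complex.exp (-q * t)) * ((Abar t : ℝ) : ℂ) := by
    rw [← integral_indicator measurableSet_Ici]
    congr 1
    funext t
    rw [show (∫ s : ℝ, W2 (t, s)) = ∫ s : ℝ, (fun s => W2 (t, s)) s from rfl, hsecW2_t t,
      integral_indicator measurableSet_Ioc, MeasureTheory.integral_const_mul]
    rw [show (∫ s in Ioc 0 t, ((αA s : ℝ) : ℂ)) = ((∫ s in Ioc 0 t, αA s : ℝ) : ℂ) from
      integral_ofReal, hIval t]
    rcases le_or_gt 0 t with ht | ht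
    · rw [indicator_of_mem (mem_Ici.mpr ht)]
    · rw [indicator_of_notMem (by simpa using not_le.mpr ht)]
      have hAe : Abar t = 0 := by
        rw [hAbardef]
        simp only []
        rw [Ioc_eq_empty (not_lt.mpr ht.le)]
        simp
      rw [hAe]
      simp
  have hJ2 : (∫ s : ℝ, ∫ t : ℝ, W2 (t, s))
      = ∫ x in Ioi (0:ℝ), Complex.exp (-q * x) * ((αA x : ℝ) : ℂ) := by
    rw [← integral_indicator measurableSet_Ioi]
    congr 1
    funext s
    rcases lt_or_ge 0 s with hs | hs
    · rw [show (∫ t : ℝ, W2 (t, s)) = ∫ t : ℝ, (fun t => W2 (t, s)) t from rfl, hsecW2_s s hs,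
        integral_indicator measurableSet_Ici, indicator_of_mem (mem_Ioi.mpr hs)]
      rw [integral_Ici_eq_integral_Ioi]
      rw [show (fun t : ℝ => (q * Complex.exp (-q * t)) * ((αA s : ℝ) : ℂ))
          = fun t : ℝ => ((αA s : ℝ) : ℂ) * q * Complex.exp (-q * t) from
        funext fun t => by ring]
      rw [MeasureTheory.integral_const_mul, integral_cexp_Ioi q hq s]
      field_simp
    · rw [show (∫ t : ℝ, W2 (t, s)) = ∫ t : ℝ, (fun t => W2 (t, s)) t from rfl, hsecW2_s0 s hs,
        indicator_of_notMem (by simpa using not_lt.mpr hs)]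
      simp
  -- the geometric series identity
  have hKey : (∫ x in Ici (0:ℝ), Complex.exp (-q * x) * ((αA x : ℝ) : ℂ)) = (1 - Lp)⁻¹ * Lu := by
    have h1 : ∀ x : ℝ, Complex.exp (-q * x) * ((αA x : ℝ) : ℂ)
        = ∑' i, Complex.exp (-q * x) * ((G i x : ℝ) : ℂ) := by
      intro x
      rw [hαdef]
      simp only []
      rw [Complex.ofReal_tsum]
      exact (tsum_mul_left).symm
    rw [show (fun x : ℝ => Complex.exp (-q * x) * ((αA x : ℝ) : ℂ))
        = fun x : ℝ => ∑' i, Complex.exp (-q * x) * ((G i x : ℝ) : ℂ) from funext h1]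
    rw [integral_tsum (fun i => ((hFqint i).aestronglyMeasurable).restrict)
      (ne_top_of_le_ne_top hMser (ENNReal.tsum_le_tsum fun i => setLIntegral_le_lintegral _ _))]
    have h2 : ∀ i : ℕ, (∫ x in Ici (0:ℝ), Complex.exp (-q * x) * ((G i x : ℝ) : ℂ))
        = Lp ^ i * Lu := by
      intro i
      rw [← hind_eq (G i) (hGz i)]
      exact hlapG i
    rw [tsum_congr h2, tsum_mul_right, tsum_geometric_of_norm_lt_one hLp1]
  -- conclusion
  have hfinal : (∫ s in Ici (0:ℝ), Complex.exp (-q * ((τinv s : ℝ) : ℂ))) = (1 - Lp)⁻¹ * Lu := by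
    rw [← hI1, ← hswap1, hI2, ← hJ1, hswap2, hJ2, ← integral_Ici_eq_integral_Ioi, hKey]
  rw [show (∫ s in Ici (0:ℝ), Complex.exp (-q * ((τinv s : ℝ) : ℂ))) = (1 - Lp)⁻¹ * Lu from hfinal]
  rw [← mul_assoc, mul_inv_cancel₀ hLpne, one_mul]
end
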